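/- arXiv:2006.13793 — 2 statements merged into one kernel-verified Lean document; each statement's English description precedes it below -/
import Mathlib

section
/- Let 𝒫 be a finite partition of S¹ with |𝒫| ≥ 2 into path-connected parts such that the auxiliary quiver Q — with vertex set 𝒫 and an arrow P → P' whenever P ≠ P', P ∪ P' is path-connected, and there exist x ∈ P, y ∈ P' with y ⪯ x — is a quiver of type Ã_{|𝒫|−1}. If M is a Jordan cell representation of Q, then the push down of M — the representation U of Ã_ℝ with U(x) = M(P) for x ∈ P, U equal to the identity on generating morphisms between points of the same part, and equal to the composite of the maps of M along the corresponding arrows of Q otherwise — is a Jordan cell of Ã_ℝ. -/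
open Set

noncomputable section

/-- A continuous quiver of type Ã: the data of the (even) set `S` of sinks/sources
on the circle, described via the cardinality `2*m`-ish data `m` and the angles `α`.
When `m = 0` we are in the cyclic case and fix `α j = π j`. -/
structure AtR where
  m : ℕ
  α : ℤ → ℝ
  mono : StrictMono α
  cyc : m = 0 → ∀ j : ℤ, α j = Real.pi * j
  per : m ≠ 0 → ∀ j : ℤ, α (j + 2 * m) = α j + 2 * Real.pi
  base0 : 0 ≤ α 0
  base1 : α 0 < 2 * Real.pi

namespace AtR

variable (Q : AtR)

/-- `covRel θ φ` holds iff there is a morphism `e^{iθ} → e^{iφ}` in the continuous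
quiver of type Ã, presented on the universal cover `ℝ` of the circle.
In the cyclic case (`m = 0`) morphisms go counterclockwise, i.e. `θ ≤ φ`;
otherwise a morphism stays within one (lifted) arc `[α j, α (j+1)]` and goes
down on even arcs (towards the sink `α j`) and up on odd arcs. -/
def covRel (θ φ : ℝ) : Prop :=
  if Q.m = 0 then θ ≤ φ
  else ∃ j : ℤ, θ ∈ Set.Icc (Q.α j) (Q.α (j + 1)) ∧ φ ∈ Set.Icc (Q.α j) (Q.α (j + 1)) ∧
    ((Even j ∧ φ ≤ θ) ∨ (¬ Even j ∧ θ ≤ φ))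

variable {Q}

lemma arcs_overlap {j j' : ℤ} {x : ℝ}
    (hj : x ∈ Set.Icc (Q.α j) (Q.α (j + 1))) (hj' : x ∈ Set.Icc (Q.α j') (Q.α (j' + 1)))
    (hne : j ≠ j') :
    (j' = j + 1 ∧ x = Q.α (j + 1)) ∨ (j = j' + 1 ∧ x = Q.α j) := by
  rcases lt_or_gt_of_ne hne with h | h
  · left
    have h1 : j + 1 ≤ j' := by omega
    have h2 : Q.α (j + 1) ≤ Q.α j' := Q.mono.monotone h1
    have hx : x = Q.α (j + 1) := le_antisymm hj.2 (le_trans h2 hj'.1)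
    have hx2 : Q.α (j + 1) = Q.α j' := le_antisymm h2 (hx ▸ hj'.1)
    exact ⟨(Q.mono.injective hx2).symm, hx⟩
  · right
    have h1 : j' + 1 ≤ j := by omega
    have h2 : Q.α (j' + 1) ≤ Q.α j := Q.mono.monotone h1
    have hx : x = Q.α (j' + 1) := le_antisymm hj'.2 (le_trans h2 hj.1)
    have hx2 : Q.α (j' + 1) = Q.α j := le_antisymm h2 (hx ▸ hj.1)
    exact ⟨Q.mono.injective hx2.symm, hx.trans hx2⟩

/-- Key lemma: if there are morphisms `θ → φ` and `φ → ψ` then `φ` lies in the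
convex hull of `{θ, ψ}`. -/
lemma covRel_hull {θ φ ψ : ℝ} (h1 : Q.covRel θ φ) (h2 : Q.covRel φ ψ) :
    min θ ψ ≤ φ ∧ φ ≤ max θ ψ := by
  unfold covRel at h1 h2
  by_cases hm : Q.m = 0
  · rw [if_pos hm] at h1 h2
    exact ⟨le_trans (min_le_left _ _) h1, le_trans h2 (le_max_right _ _)⟩
  · rw [if_neg hm] at h1 h2
    obtain ⟨j, hθ, hφ, hp⟩ := h1
    obtain ⟨j2, hφ2, hψ, hp2⟩ := h2
    by_cases hjj : j = j2
    · subst hjj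
      rcases hp with ⟨he, hle⟩ | ⟨ho, hle⟩ <;> rcases hp2 with ⟨he2, hle2⟩ | ⟨ho2, hle2⟩
      · exact ⟨le_trans (min_le_right _ _) hle2, le_trans hle (le_max_left _ _)⟩
      · exact absurd he ho2
      · exact absurd he2 ho
      · exact ⟨le_trans (min_le_left _ _) hle, le_trans hle2 (le_max_right _ _)⟩
    · rcases arcs_overlap hφ hφ2 hjj with ⟨hj2, hφe⟩ | ⟨hj2, hφe⟩
      · -- j2 = j + 1, φ = α (j+1)
        rcases hp with ⟨he, hle⟩ | ⟨ho, hle⟩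
        · -- Even j, φ ≤ θ and θ ≤ α (j+1) = φ so θ = φ
          have hθφ : θ = φ := le_antisymm (hφe ▸ hθ.2) hle
          rw [← hθφ]
          exact ⟨min_le_left _ _, le_max_left _ _⟩
        · -- Odd j so j2 = j+1 is even
          have he2 : Even j2 := by
            rw [hj2]; rcases Int.even_or_odd j with h | h
            · exact absurd h ho
            · exact h.add_one
          rcases hp2 with ⟨_, hle2⟩ | ⟨ho2, _⟩
          · -- ψ ≤ φ, but φ = α j2 is the bottom of the arc of j2, so ψ = φ
            have hψφ : ψ = φ := by
              have : Q.α j2 ≤ ψ := hψ.1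
              have hb : φ = Q.α j2 := by rw [hj2]; exact hφe
              linarith [hb ▸ this]
            rw [← hψφ]
            exact ⟨min_le_right _ _, le_max_right _ _⟩
          · exact absurd he2 ho2
      · -- j = j2 + 1, φ = α j
        rcases hp2 with ⟨he2, hle2⟩ | ⟨ho2, hle2⟩
        · -- Even j2, ψ ≤ φ; φ = α j = α (j2+1) is the top of arc j2... and j odd
          have ho : ¬ Even j := by
            rw [hj2]; intro h
            exact (Int.even_add_one.mp h) he2
          rcases hp with ⟨he', _⟩ | ⟨_, hle⟩
          · exact absurd he' ho
          · -- θ ≤ φ, φ = α j is bottom of arc j, so θ = φ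
            have hθφ : θ = φ := le_antisymm hle (hφe ▸ hθ.1)
            rw [← hθφ]
            exact ⟨min_le_left _ _, le_max_left _ _⟩
        · -- Odd j2, φ ≤ ψ; φ = α (j2+1) top of arc j2 so ψ = φ
          have hψφ : ψ = φ := by
            have hup : ψ ≤ Q.α (j2 + 1) := hψ.2
            have hb : φ = Q.α (j2 + 1) := by rw [← hj2]; exact hφe
            linarith [hb ▸ hup]
          rw [← hψφ]
          exact ⟨min_le_right _ _, le_max_right _ _⟩

lemma covRel_up (j : ℤ) (h : Q.m = 0 ∨ ¬ Even j) : Q.covRel (Q.α j) (Q.α (j + 1)) := by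
  unfold covRel
  split_ifs with hm
  · exact Q.mono.monotone (by omega)
  · rcases h with h0 | hodd
    · exact absurd h0 hm
    · exact ⟨j, ⟨le_rfl, Q.mono.monotone (by omega)⟩,
        ⟨Q.mono.monotone (by omega), le_rfl⟩,
        Or.inr ⟨hodd, Q.mono.monotone (by omega)⟩⟩

lemma covRel_down (j : ℤ) (hm : Q.m ≠ 0) (he : Even j) :
    Q.covRel (Q.α (j + 1)) (Q.α j) := by
  unfold covRel
  rw [if_neg hm]
  exact ⟨j, ⟨Q.mono.monotone (by omega), le_rfl⟩, ⟨le_rfl, Q.mono.monotone (by omega)⟩,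
    Or.inl ⟨he, Q.mono.monotone (by omega)⟩⟩

variable (Q)

/-- The number of arcs used to travel once around the circle. -/
def periodN : ℕ := if Q.m = 0 then 2 else 2 * Q.m

lemma periodN_pos : 0 < Q.periodN := by
  unfold periodN; split_ifs <;> omega

lemma α_periodN : Q.α (Q.periodN : ℤ) = Q.α 0 + 2 * Real.pi := by
  unfold periodN
  split_ifs with hm
  · have h2 : ((2:ℕ):ℤ) = 2 := by norm_cast
    rw [h2, Q.cyc hm 2, Q.cyc hm 0]
    push_cast; ring
  · have := Q.per hm 0
    rw [zero_add] at this
    rw [← this]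
    norm_cast

end AtR
/-- A representation (i.e. an `S¹` persistence module) of the continuous quiver of
type Ã, presented equivariantly on the universal cover: vector spaces `obj θ`,
linear maps along every morphism of the quiver (encoded by `covRel`), and a
periodicity isomorphism `per` identifying `obj (θ + 2π)` with `obj θ`,
compatibly with the maps. -/
structure SRep (k : Type) [Field k] (Q : AtR) where
  obj : ℝ → Type
  [instAdd : ∀ θ, AddCommGroup (obj θ)]
  [instMod : ∀ θ, Module k (obj θ)]
  map : ∀ {θ φ : ℝ}, Q.covRel θ φ → (obj θ →ₗ[k] obj φ)
  map_id : ∀ (θ : ℝ) (h : Q.covRel θ θ), map h = LinearMap.id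
  map_comp : ∀ {θ φ ψ : ℝ} (h1 : Q.covRel θ φ) (h2 : Q.covRel φ ψ) (h3 : Q.covRel θ ψ),
      map h3 = (map h2).comp (map h1)
  per : ∀ θ : ℝ, obj (θ + 2 * Real.pi) ≃ₗ[k] obj θ
  per_map : ∀ {θ φ : ℝ} (h : Q.covRel θ φ) (h' : Q.covRel (θ + 2 * Real.pi) (φ + 2 * Real.pi)),
      (map h).comp (per θ).toLinearMap = ((per φ).toLinearMap).comp (map h')

attribute [instance] SRep.instAdd SRep.instMod

namespace SRep

variable {k : Type} [Field k] {Q : AtR}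

lemma per_map_apply (V : SRep k Q) {θ φ : ℝ} (h : Q.covRel θ φ)
    (h' : Q.covRel (θ + 2 * Real.pi) (φ + 2 * Real.pi)) (x : V.obj (θ + 2 * Real.pi)) :
    V.map h (V.per θ x) = V.per φ (V.map h' x) :=
  LinearMap.congr_fun (V.per_map h h') x

/-- Transport along an equality of points of the cover. -/
def castO (V : SRep k Q) {a b : ℝ} (h : a = b) : V.obj a ≃ₗ[k] V.obj b :=
  h ▸ LinearEquiv.refl k (V.obj a)

/-- A family of linear maps is a morphism of representations if it is natural with
respect to all the structure maps and the periodicity isomorphisms. -/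
def IsHomFam (V W : SRep k Q) (f : ∀ θ, V.obj θ →ₗ[k] W.obj θ) : Prop :=
  (∀ {θ φ : ℝ} (h : Q.covRel θ φ) (v : V.obj θ), f φ (V.map h v) = W.map h (f θ v)) ∧
  (∀ (θ : ℝ) (v : V.obj (θ + 2 * Real.pi)), f θ (V.per θ v) = W.per θ (f (θ + 2 * Real.pi) v))

/-- Two representations are isomorphic if there is a family of linear isomorphisms
natural with respect to the structure maps and the periodicity isomorphisms. -/
def RepIso (V W : SRep k Q) : Prop :=
  ∃ e : ∀ θ, V.obj θ ≃ₗ[k] W.obj θ,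
    (∀ {θ φ : ℝ} (h : Q.covRel θ φ) (v : V.obj θ), e φ (V.map h v) = W.map h (e θ v)) ∧
    (∀ (θ : ℝ) (v : V.obj (θ + 2 * Real.pi)), e θ (V.per θ v) = W.per θ (e (θ + 2 * Real.pi) v))

/-- `U` is a (direct) summand of `V`. -/
def SummandOf (U V : SRep k Q) : Prop :=
  ∃ (f : ∀ θ, U.obj θ →ₗ[k] V.obj θ) (g : ∀ θ, V.obj θ →ₗ[k] U.obj θ),
    IsHomFam U V f ∧ IsHomFam V U g ∧ ∀ (θ : ℝ) (u : U.obj θ), g θ (f θ u) = u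

/-- A representation is nonzero if some of its spaces is nonzero. -/
def Nonzero (V : SRep k Q) : Prop := ∃ (θ : ℝ) (v : V.obj θ), v ≠ 0

/-- Pointwise finite-dimensional. -/
def Pwf (V : SRep k Q) : Prop := ∀ θ, FiniteDimensional k (V.obj θ)

/-- Binary direct sum of representations. -/
def prod (V W : SRep k Q) : SRep k Q where
  obj θ := V.obj θ × W.obj θ
  map h := (V.map h).prodMap (W.map h)
  map_id θ h := by
    rw [V.map_id θ h, W.map_id θ h]; exact LinearMap.prodMap_id
  map_comp h1 h2 h3 := by
    rw [V.map_comp h1 h2 h3, W.map_comp h1 h2 h3]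
    exact (LinearMap.prodMap_comp _ _ _ _).symm
  per θ := (V.per θ).prodCongr (W.per θ)
  per_map h h' := by
    apply LinearMap.ext
    rintro ⟨a, b⟩
    simp only [LinearMap.comp_apply, LinearEquiv.coe_coe, LinearMap.prodMap_apply,
      LinearEquiv.prodCongr_apply]
    exact Prod.ext (V.per_map_apply h h' a) (W.per_map_apply h h' b)

/-- Arbitrary direct sums of representations. -/
def dsum {B : Type} (A : B → SRep k Q) : SRep k Q where
  obj θ := Π₀ b, (A b).obj θ
  map h := DFinsupp.mapRange.linearMap fun b => (A b).map h
  map_id θ h := by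
    have : (fun b => (A b).map h) = fun b => (LinearMap.id : (A b).obj θ →ₗ[k] _) := by
      funext b; exact (A b).map_id θ h
    rw [this]; exact DFinsupp.mapRange.linearMap_id
  map_comp h1 h2 h3 := by
    have : (fun b => (A b).map h3) = fun b => ((A b).map h2).comp ((A b).map h1) := by
      funext b; exact (A b).map_comp h1 h2 h3
    rw [this]; exact DFinsupp.mapRange.linearMap_comp _ _
  per θ := DFinsupp.mapRange.linearEquiv fun b => (A b).per θ
  per_map h h' := by
    apply LinearMap.ext
    intro x
    ext b
    simp only [LinearMap.comp_apply, LinearEquiv.coe_coe,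
      DFinsupp.mapRange.linearEquiv_apply, DFinsupp.mapRange.linearMap_apply,
      DFinsupp.mapRange_apply]
    exact (A b).per_map_apply h h' (x b)

/-- Indecomposability. -/
def Indecomposable (V : SRep k Q) : Prop :=
  V.Nonzero ∧ ∀ A B : SRep k Q, A.Nonzero → B.Nonzero → ¬ RepIso V (A.prod B)

end SRep
/-! ## Bars -/

/-- The basis of the bar `M_I` at the point `e^{iθ}`: the set `ξ⁻¹(e^{iθ}) ∩ I`. -/
def barIdx (I : Set ℝ) (θ : ℝ) : Type :=
  {β : ℝ // β ∈ I ∧ ∃ n : ℤ, β = θ + 2 * Real.pi * n}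

/-- The canonical identification of the bars' bases over `θ + 2π` and `θ`. -/
def barShift (I : Set ℝ) (θ : ℝ) : barIdx I (θ + 2 * Real.pi) ≃ barIdx I θ where
  toFun b := ⟨b.1, b.2.1, by
    obtain ⟨n, hn⟩ := b.2.2
    exact ⟨n + 1, by push_cast; linarith⟩⟩
  invFun b := ⟨b.1, b.2.1, by
    obtain ⟨n, hn⟩ := b.2.2
    exact ⟨n - 1, by push_cast; linarith⟩⟩
  left_inv b := by apply Subtype.ext; rfl
  right_inv b := by apply Subtype.ext; rfl

variable (k : Type) [Field k]

/-- The structure map of the bar `M_I` along a morphism `θ → φ`: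
a basis vector `b_β` is sent to `b_{β - θ + φ}` when `β - θ + φ ∈ I` and to `0`
otherwise. -/
def barMapHom (I : Set ℝ) (θ φ : ℝ) :
    (barIdx I θ →₀ k) →ₗ[k] (barIdx I φ →₀ k) := by
  classical
  exact Finsupp.linearCombination k (fun β : barIdx I θ =>
    if h : β.1 - θ + φ ∈ I then
      Finsupp.single (⟨β.1 - θ + φ, h, by
        obtain ⟨n, hn⟩ := β.2.2
        exact ⟨n, by rw [hn]; ring⟩⟩ : barIdx I φ) (1 : k)
    else 0)

variable {k}

namespace SRep

variable {Q : AtR}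

/-- `V` is (isomorphic to) the bar `M_I` on the bounded interval `I ⊂ ℝ`. -/
def BarOn (I : Set ℝ) (V : SRep k Q) : Prop :=
  I.Nonempty ∧ Bornology.IsBounded I ∧ I.OrdConnected ∧
  ∃ e : ∀ θ, V.obj θ ≃ₗ[k] (barIdx I θ →₀ k),
    (∀ {θ φ : ℝ} (h : Q.covRel θ φ) (v : V.obj θ),
        e φ (V.map h v) = barMapHom k I θ φ (e θ v)) ∧
    (∀ (θ : ℝ) (v : V.obj (θ + 2 * Real.pi)),
        e θ (V.per θ v) = Finsupp.equivMapDomain (barShift I θ) (e (θ + 2 * Real.pi) v))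

/-- `V` is a bar. -/
def IsBar (V : SRep k Q) : Prop := ∃ I : Set ℝ, BarOn I V

end SRep
/-! ## Jordan cells -/

namespace SRep

variable {k : Type} [Field k] {Q : AtR}

/-- One step of the monodromy: the isomorphism `V(α j) ≃ V(α (j+1))` obtained
from the structure map along the arc (or its inverse, depending on the
orientation of the arc). -/
def step (V : SRep k Q)
    (hiso : ∀ ⦃θ φ : ℝ⦄ (h : Q.covRel θ φ), Function.Bijective (V.map h)) (j : ℤ) :
    V.obj (Q.α j) ≃ₗ[k] V.obj (Q.α (j + 1)) :=
  if h : Q.m = 0 ∨ ¬ Even j then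
    LinearEquiv.ofBijective _ (hiso (AtR.covRel_up j h))
  else
    (LinearEquiv.ofBijective _ (hiso (AtR.covRel_down j
      (by push_neg at h; exact h.1) (by push_neg at h; exact h.2)))).symm

/-- The zig-zag isomorphism from `V(α 0)` to `V(α n)`. -/
def zig (V : SRep k Q)
    (hiso : ∀ ⦃θ φ : ℝ⦄ (h : Q.covRel θ φ), Function.Bijective (V.map h)) :
    (n : ℕ) → (V.obj (Q.α 0) ≃ₗ[k] V.obj (Q.α (n : ℤ)))
  | 0 => V.castO (congrArg Q.α (by norm_num))
  | (n + 1) => ((V.zig hiso n).trans (V.step hiso (n : ℤ))).trans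
      (V.castO (congrArg Q.α (by push_cast; ring)))

/-- The monodromy automorphism `V̂` of `V(α 0)`: travel once counterclockwise
around the circle (via `zig`) and come back via the periodicity isomorphism. -/
def monodromy (V : SRep k Q)
    (hiso : ∀ ⦃θ φ : ℝ⦄ (h : Q.covRel θ φ), Function.Bijective (V.map h)) :
    V.obj (Q.α 0) ≃ₗ[k] V.obj (Q.α 0) :=
  ((V.zig hiso Q.periodN).trans (V.castO Q.α_periodN)).trans (V.per (Q.α 0))

/-- `V` is a Jordan cell: its spaces have a constant finite dimension `d ≥ 1`,
all its structure maps are isomorphisms, and `V(α 0)` admits no direct sum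
decomposition into two nonzero subspaces invariant under the monodromy. -/
structure IsJordanCell (V : SRep k Q) : Prop where
  bij : ∀ ⦃θ φ : ℝ⦄ (h : Q.covRel θ φ), Function.Bijective (V.map h)
  dim : ∃ d : ℕ, 1 ≤ d ∧ ∀ θ, Module.finrank k (V.obj θ) = d
  indec : ∀ U W : Submodule k (V.obj (Q.α 0)), IsCompl U W →
      (∀ u ∈ U, V.monodromy bij u ∈ U) → (∀ w ∈ W, V.monodromy bij w ∈ W) →
      U = ⊥ ∨ W = ⊥

end SRep
/-! ## Restriction -/

/-- The periodization of a subset of `ℝ`: the full preimage under `ξ` of its image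
in the circle. -/
def periodize (s : Set ℝ) : Set ℝ := {θ | ∃ n : ℤ, θ + 2 * Real.pi * n ∈ s}

lemma periodize_shift (s : Set ℝ) (θ : ℝ) :
    θ ∈ periodize s ↔ θ + 2 * Real.pi ∈ periodize s := by
  constructor
  · rintro ⟨n, hn⟩
    refine ⟨n - 1, ?_⟩
    push_cast
    rw [show θ + 2 * Real.pi + 2 * Real.pi * ((n : ℝ) - 1) = θ + 2 * Real.pi * (n : ℝ) from
      by ring]
    exact hn
  · rintro ⟨n, hn⟩
    refine ⟨n + 1, ?_⟩
    push_cast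
    rw [show θ + 2 * Real.pi * ((n : ℝ) + 1) = θ + 2 * Real.pi + 2 * Real.pi * (n : ℝ) from
      by ring]
    exact hn

namespace SRep

open Classical

variable {k : Type} [Field k] {Q : AtR}

/-- The restriction `V|_A` of a representation to a (2π-periodic) subset `A ⊂ ℝ`
corresponding to a subset of the circle.  Its space at `θ ∈ A` is `V(θ)` and `0`
elsewhere; its structure map along a morphism `θ → φ` is `V(θ,φ)` when every
point through which the morphism factors lies in `A` (the set of such points
being the interval `[min θ φ, max θ φ]`), and `0` otherwise. -/
def restrict (V : SRep k Q) (A : Set ℝ) (hA : ∀ θ, θ ∈ A ↔ θ + 2 * Real.pi ∈ A) :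
    SRep k Q where
  obj θ := PLift (θ ∈ A) → V.obj θ
  map {θ φ} h :=
    { toFun := fun F _ =>
        if c : Set.Icc (min θ φ) (max θ φ) ⊆ A then
          V.map h (F ⟨c ⟨min_le_left θ φ, le_max_left θ φ⟩⟩) else 0
      map_add' := by
        intro F G; funext hφ
        by_cases c : Set.Icc (min θ φ) (max θ φ) ⊆ A <;> simp [c]
      map_smul' := by
        intro a F; funext hφ
        by_cases c : Set.Icc (min θ φ) (max θ φ) ⊆ A <;> simp [c] }
  map_id θ h := by
    apply LinearMap.ext; intro F; funext hφ
    have c : Set.Icc (min θ θ) (max θ θ) ⊆ A := by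
      rw [min_self, max_self, Set.Icc_self]
      exact Set.singleton_subset_iff.mpr hφ.down
    simp only [LinearMap.coe_mk, AddHom.coe_mk, LinearMap.id_coe, id_eq]
    rw [dif_pos c, V.map_id θ h]
    rfl
  map_comp {θ φ ψ} h1 h2 h3 := by
    apply LinearMap.ext; intro F; funext hψ
    have hkey := AtR.covRel_hull h1 h2
    have s1 : Set.Icc (min θ φ) (max θ φ) ⊆ Set.Icc (min θ ψ) (max θ ψ) :=
      Set.Icc_subset_Icc (le_min (min_le_left θ ψ) hkey.1) (max_le (le_max_left θ ψ) hkey.2)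
    have s2 : Set.Icc (min φ ψ) (max φ ψ) ⊆ Set.Icc (min θ ψ) (max θ ψ) :=
      Set.Icc_subset_Icc (le_min hkey.1 (min_le_right θ ψ)) (max_le hkey.2 (le_max_right θ ψ))
    by_cases c1 : Set.Icc (min θ φ) (max θ φ) ⊆ A
    · by_cases c2 : Set.Icc (min φ ψ) (max φ ψ) ⊆ A
      · have c3 : Set.Icc (min θ ψ) (max θ ψ) ⊆ A := by
          intro z hz
          rcases le_total θ ψ with hθψ | hθψ
          · rw [min_eq_left hθψ, max_eq_right hθψ] at hz
            rcases le_total z φ with hzφ | hzφ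
            · exact c1 ⟨le_trans (min_le_left θ φ) hz.1, le_trans hzφ (le_max_right θ φ)⟩
            · exact c2 ⟨le_trans (min_le_left φ ψ) hzφ, le_trans hz.2 (le_max_right φ ψ)⟩
          · rw [min_eq_right hθψ, max_eq_left hθψ] at hz
            rcases le_total z φ with hzφ | hzφ
            · exact c2 ⟨le_trans (min_le_right φ ψ) hz.1, le_trans hzφ (le_max_left φ ψ)⟩
            · exact c1 ⟨le_trans (min_le_right θ φ) hzφ, le_trans hz.2 (le_max_left θ φ)⟩
        simp only [LinearMap.coe_mk, AddHom.coe_mk, LinearMap.comp_apply]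
        rw [dif_pos c3, dif_pos c2, dif_pos c1, V.map_comp h1 h2 h3]
        rfl
      · have c3 : ¬ Set.Icc (min θ ψ) (max θ ψ) ⊆ A := fun c3 => c2 fun z hz => c3 (s2 hz)
        simp only [LinearMap.coe_mk, AddHom.coe_mk, LinearMap.comp_apply]
        rw [dif_neg c3, dif_neg c2]
    · have c3 : ¬ Set.Icc (min θ ψ) (max θ ψ) ⊆ A := fun c3 => c1 fun z hz => c3 (s1 hz)
      simp only [LinearMap.coe_mk, AddHom.coe_mk, LinearMap.comp_apply]
      rw [dif_neg c3]
      by_cases c2 : Set.Icc (min φ ψ) (max φ ψ) ⊆ A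
      · rw [dif_pos c2, dif_neg c1, map_zero]
      · rw [dif_neg c2]
  per θ :=
    { toFun := fun F hθ => V.per θ (F ⟨(hA θ).mp hθ.down⟩)
      map_add' := by intro F G; funext hθ; simp
      map_smul' := by intro a F; funext hθ; simp
      invFun := fun G h2 => (V.per θ).symm (G ⟨(hA θ).mpr h2.down⟩)
      left_inv := by intro F; funext h2; simp
      right_inv := by intro G; funext hθ; simp }
  per_map {θ φ} h h' := by
    apply LinearMap.ext; intro F; funext hφ
    have e1 : min (θ + 2 * Real.pi) (φ + 2 * Real.pi) = min θ φ + 2 * Real.pi :=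
      min_add_add_right θ φ _
    have e2 : max (θ + 2 * Real.pi) (φ + 2 * Real.pi) = max θ φ + 2 * Real.pi :=
      max_add_add_right θ φ _
    have hcc : (Set.Icc (min (θ + 2 * Real.pi) (φ + 2 * Real.pi))
        (max (θ + 2 * Real.pi) (φ + 2 * Real.pi)) ⊆ A) ↔
        (Set.Icc (min θ φ) (max θ φ) ⊆ A) := by
      rw [e1, e2]
      constructor
      · intro c z hz
        rw [hA z]
        exact c ⟨by linarith [hz.1], by linarith [hz.2]⟩
      · intro c z hz
        have h2 : z - 2 * Real.pi ∈ Set.Icc (min θ φ) (max θ φ) :=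
          ⟨by linarith [hz.1], by linarith [hz.2]⟩
        have h3 := (hA (z - 2 * Real.pi)).mp (c h2)
        simpa using h3
    simp only [LinearMap.coe_mk, AddHom.coe_mk, LinearMap.comp_apply, LinearEquiv.coe_coe,
      LinearEquiv.coe_mk]
    by_cases c : Set.Icc (min θ φ) (max θ φ) ⊆ A
    · rw [dif_pos c, dif_pos (hcc.mpr c)]
      exact V.per_map_apply h h' _
    · rw [dif_neg c, dif_neg (fun cc => c (hcc.mp cc)), map_zero]

/-- `V` is finitistic: it is pointwise finite-dimensional and for each arc
`R̄_n = [α n, α (n+1)]`, every bar in the bar code decomposition of the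
restriction `V|_{R̄_n}` has support touching an endpoint of the arc. -/
def Finitistic (V : SRep k Q) : Prop :=
  Pwf V ∧ ∀ n : ℤ, ∃ (B : Type) (Wb : B → SRep k Q) (I : B → Set ℝ),
    (∀ b, BarOn (I b) (Wb b) ∧ I b ⊆ Set.Icc (Q.α n) (Q.α (n + 1)) ∧
      (Q.α n ∈ I b ∨ Q.α (n + 1) ∈ I b)) ∧
    RepIso (V.restrict (periodize (Set.Icc (Q.α n) (Q.α (n + 1))))
      (periodize_shift _)) (dsum Wb)

end SRep
/-! ## Representations of (finite) quivers of type Ã_n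

An `Ã_n` quiver has `N = n + 1` vertices, indexed by `ZMod N`, arranged
counterclockwise in a cycle, with exactly one arrow between the vertices `i` and
`i + 1` for each `i : ZMod N`; the orientation function `o` records its direction
(`o i = true` iff the arrow goes `i → i + 1`). -/

/-- A representation of the `Ã_{N-1}` quiver with orientation `o`. -/
structure CycRep (k : Type) [Field k] (N : ℕ) (o : ZMod N → Bool) where
  M : ZMod N → Type
  [instAdd : ∀ i, AddCommGroup (M i)]
  [instMod : ∀ i, Module k (M i)]
  up : ∀ i : ZMod N, o i = true → (M i →ₗ[k] M (i + 1))
  down : ∀ i : ZMod N, o i = false → (M (i + 1) →ₗ[k] M i)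

attribute [instance] CycRep.instAdd CycRep.instMod

namespace CycRep

variable {k : Type} [Field k] {N : ℕ} {o : ZMod N → Bool}

/-- Transport along an equality of vertices. -/
def castM (A : CycRep k N o) {i i' : ZMod N} (h : i = i') : A.M i ≃ₗ[k] A.M i' :=
  h ▸ LinearEquiv.refl k (A.M i)

/-- Isomorphism of representations of the `Ã_{N-1}` quiver. -/
def Iso (A B : CycRep k N o) : Prop :=
  ∃ e : ∀ i, A.M i ≃ₗ[k] B.M i,
    (∀ (i : ZMod N) (h : o i = true) (v : A.M i),
        e (i + 1) (A.up i h v) = B.up i h (e i v)) ∧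
    (∀ (i : ZMod N) (h : o i = false) (v : A.M (i + 1)),
        e i (A.down i h v) = B.down i h (e (i + 1) v))

def Nonzero (A : CycRep k N o) : Prop := ∃ (i : ZMod N) (v : A.M i), v ≠ 0

/-- Binary direct sum. -/
def prod (A B : CycRep k N o) : CycRep k N o where
  M i := A.M i × B.M i
  up i h := (A.up i h).prodMap (B.up i h)
  down i h := (A.down i h).prodMap (B.down i h)

/-- Arbitrary direct sum. -/
def dsum {B : Type} (A : B → CycRep k N o) : CycRep k N o where
  M i := Π₀ b, (A b).M i
  up i h := DFinsupp.mapRange.linearMap fun b => (A b).up i h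
  down i h := DFinsupp.mapRange.linearMap fun b => (A b).down i h

def Indecomposable (A : CycRep k N o) : Prop :=
  A.Nonzero ∧ ∀ B C : CycRep k N o, B.Nonzero → C.Nonzero → ¬ Iso A (B.prod C)

end CycRep

/-- The basis of the bar on the interval `{a, ..., b} ⊂ ℤ` at the vertex `i`:
integers in the interval congruent to `i` mod `N`. -/
def cycIdx (N : ℕ) (a b : ℤ) (i : ZMod N) : Type :=
  {m : ℤ // m ∈ Set.Icc a b ∧ ((m : ZMod N) = i)}

variable (k : Type) [Field k]

open Classical in
/-- The bar's map along an arrow `i → i + 1` : `b_m ↦ b_{m+1}` when `m+1` stays in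
the interval, and `0` otherwise. -/
def cycBarUp (N : ℕ) (a b : ℤ) (i : ZMod N) :
    (cycIdx N a b i →₀ k) →ₗ[k] (cycIdx N a b (i + 1) →₀ k) :=
  Finsupp.linearCombination k (fun m : cycIdx N a b i =>
    if hm : m.1 + 1 ∈ Set.Icc a b then
      Finsupp.single (⟨m.1 + 1, hm, by push_cast; rw [m.2.2]⟩ : cycIdx N a b (i + 1)) (1 : k)
    else 0)

open Classical in
/-- The bar's map along an arrow `i + 1 → i` : `b_m ↦ b_{m-1}` when `m-1` stays in
the interval, and `0` otherwise. -/
def cycBarDown (N : ℕ) (a b : ℤ) (i : ZMod N) :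
    (cycIdx N a b (i + 1) →₀ k) →ₗ[k] (cycIdx N a b i →₀ k) :=
  Finsupp.linearCombination k (fun m : cycIdx N a b (i + 1) =>
    if hm : m.1 - 1 ∈ Set.Icc a b then
      Finsupp.single (⟨m.1 - 1, hm, by push_cast; rw [m.2.2]; ring⟩ : cycIdx N a b i) (1 : k)
    else 0)

variable {k}

namespace CycRep

variable {k : Type} [Field k] {N : ℕ} {o : ZMod N → Bool}

/-- `A` is (isomorphic to) the bar on the interval `{a, ..., b}` of `ℤ`. -/
def BarOn (a b : ℤ) (A : CycRep k N o) : Prop :=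
  a ≤ b ∧ ∃ e : ∀ i, A.M i ≃ₗ[k] (cycIdx N a b i →₀ k),
    (∀ (i : ZMod N) (h : o i = true) (v : A.M i),
        e (i + 1) (A.up i h v) = cycBarUp k N a b i (e i v)) ∧
    (∀ (i : ZMod N) (h : o i = false) (v : A.M (i + 1)),
        e i (A.down i h v) = cycBarDown k N a b i (e (i + 1) v))

def IsBar (A : CycRep k N o) : Prop := ∃ a b : ℤ, BarOn a b A

/-- One step `M i ≃ M (i+1)` of the monodromy of a representation all of whose
arrow maps are isomorphisms. -/
def stepC (A : CycRep k N o)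
    (hup : ∀ (i : ZMod N) (h : o i = true), Function.Bijective (A.up i h))
    (hdown : ∀ (i : ZMod N) (h : o i = false), Function.Bijective (A.down i h))
    (i : ZMod N) : A.M i ≃ₗ[k] A.M (i + 1) :=
  if h : o i = true then LinearEquiv.ofBijective _ (hup i h)
  else (LinearEquiv.ofBijective _ (hdown i (by revert h; cases o i <;> simp))).symm

def zigC (A : CycRep k N o)
    (hup : ∀ (i : ZMod N) (h : o i = true), Function.Bijective (A.up i h))
    (hdown : ∀ (i : ZMod N) (h : o i = false), Function.Bijective (A.down i h)) :
    (n : ℕ) → (A.M 0 ≃ₗ[k] A.M (n : ZMod N))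
  | 0 => A.castM (by norm_num)
  | (n + 1) => ((A.zigC hup hdown n).trans (A.stepC hup hdown (n : ZMod N))).trans
      (A.castM (by push_cast; ring))

/-- The monodromy `M̂ : M 0 ≃ M 0` obtained by composing the arrow maps and their
inverses once around the cycle. -/
def monodromyC (A : CycRep k N o)
    (hup : ∀ (i : ZMod N) (h : o i = true), Function.Bijective (A.up i h))
    (hdown : ∀ (i : ZMod N) (h : o i = false), Function.Bijective (A.down i h)) :
    A.M 0 ≃ₗ[k] A.M 0 :=
  (A.zigC hup hdown N).trans (A.castM (by simp))

/-- `A` is a Jordan cell representation of the `Ã_{N-1}` quiver. -/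
structure IsJordan (A : CycRep k N o) : Prop where
  bijUp : ∀ (i : ZMod N) (h : o i = true), Function.Bijective (A.up i h)
  bijDown : ∀ (i : ZMod N) (h : o i = false), Function.Bijective (A.down i h)
  dim : ∃ d : ℕ, 1 ≤ d ∧ ∀ i, Module.finrank k (A.M i) = d
  indec : ∀ U W : Submodule k (A.M 0), IsCompl U W →
      (∀ u ∈ U, A.monodromyC bijUp bijDown u ∈ U) →
      (∀ w ∈ W, A.monodromyC bijUp bijDown w ∈ W) → U = ⊥ ∨ W = ⊥

end CycRep
/-! ## Partitions of the circle and push downs -/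

/-- A finite partition of the circle into (at least two) path-connected parts,
presented on the universal cover: `2π`-periodically ordered intervals `J j`
(`j : ℤ`), with `J (j + N)` the translate of `J j`; the parts of the circle are
the images of the `J j`, and `j` reduces mod `N` to the index of the part. -/
structure CircPartition (Q : AtR) where
  N : ℕ
  hN : 2 ≤ N
  J : ℤ → Set ℝ
  nonempty : ∀ j, (J j).Nonempty
  ordconn : ∀ j, (J j).OrdConnected
  ordered : ∀ {j j' : ℤ}, j < j' → ∀ x ∈ J j, ∀ y ∈ J j', x < y
  cover : ∀ θ : ℝ, ∃ j, θ ∈ J j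
  jper : ∀ (j : ℤ) (θ : ℝ), θ ∈ J j ↔ θ + 2 * Real.pi ∈ J (j + N)

namespace CircPartition

variable {Q : AtR} (C : CircPartition Q)

/-- The index of the part containing `θ`. -/
def partIdx (θ : ℝ) : ℤ := Classical.choose (C.cover θ)

lemma mem_partIdx (θ : ℝ) : θ ∈ C.J (C.partIdx θ) := Classical.choose_spec (C.cover θ)

lemma partIdx_eq {θ : ℝ} {j : ℤ} (h : θ ∈ C.J j) : C.partIdx θ = j := by
  by_contra hne
  rcases lt_or_gt_of_ne hne with hlt | hlt
  · exact lt_irrefl θ (C.ordered hlt _ (C.mem_partIdx θ) _ h)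
  · exact lt_irrefl θ (C.ordered hlt _ h _ (C.mem_partIdx θ))

lemma partIdx_shift (θ : ℝ) : C.partIdx (θ + 2 * Real.pi) = C.partIdx θ + C.N :=
  C.partIdx_eq ((C.jper _ _).mp (C.mem_partIdx θ))

/-- The index of the part containing `θ`, as a vertex of the auxiliary quiver. -/
def partZ (θ : ℝ) : ZMod C.N := ((C.partIdx θ : ℤ) : ZMod C.N)

lemma partZ_shift (θ : ℝ) : C.partZ (θ + 2 * Real.pi) = C.partZ θ := by
  unfold partZ
  rw [C.partIdx_shift θ]
  push_cast
  simp

lemma partZ_congr {θ φ : ℝ} (hp : C.partIdx θ = C.partIdx φ) : C.partZ θ = C.partZ φ := by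
  unfold partZ; rw [hp]

lemma partZ_succ {θ φ : ℝ} (hp : C.partIdx φ = C.partIdx θ + 1) :
    C.partZ θ + 1 = C.partZ φ := by
  unfold partZ; rw [hp]; push_cast; ring

lemma partZ_pred {θ φ : ℝ} (hp : C.partIdx θ = C.partIdx φ + 1) :
    C.partZ θ = C.partZ φ + 1 := by
  unfold partZ; rw [hp]; push_cast; ring

/-- There is an arrow from the part of `J j` to the part of `J (j+1)` in the
auxiliary quiver (their union being automatically path-connected). -/
def dirUp (j : ℤ) : Prop := ∃ x ∈ C.J j, ∃ y ∈ C.J (j + 1), Q.covRel x y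

/-- There is an arrow from the part of `J (j+1)` to the part of `J j`. -/
def dirDown (j : ℤ) : Prop := ∃ x ∈ C.J (j + 1), ∃ y ∈ C.J j, Q.covRel x y

end CircPartition

namespace SRep

variable {k : Type} [Field k] {Q : AtR}

/-- `U` is the push down to the continuous quiver of the representation `A` of the
auxiliary `Ã_{N-1}` quiver of the partition `C` (with orientation `o`):
`U` is constant equal to `A.M i` on the `i`-th part, with identity maps within a
part, the maps of `A` across boundaries of parts, and the evident periodicity. -/
def PushdownOf (C : CircPartition Q) (o : ZMod C.N → Bool) (A : CycRep k C.N o)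
    (U : SRep k Q) : Prop :=
  ∃ e : ∀ θ, U.obj θ ≃ₗ[k] A.M (C.partZ θ),
    (∀ {θ φ : ℝ} (h : Q.covRel θ φ) (hp : C.partIdx θ = C.partIdx φ) (v : U.obj θ),
        e φ (U.map h v) = A.castM (C.partZ_congr hp) (e θ v)) ∧
    (∀ {θ φ : ℝ} (h : Q.covRel θ φ) (hp : C.partIdx φ = C.partIdx θ + 1)
        (ht : o (C.partZ θ) = true) (v : U.obj θ),
        e φ (U.map h v) = A.castM (C.partZ_succ hp) (A.up (C.partZ θ) ht (e θ v))) ∧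
    (∀ {θ φ : ℝ} (h : Q.covRel θ φ) (hp : C.partIdx θ = C.partIdx φ + 1)
        (hf : o (C.partZ φ) = false) (v : U.obj θ),
        e φ (U.map h v) = A.down (C.partZ φ) hf (A.castM (C.partZ_pred hp) (e θ v))) ∧
    (∀ (θ : ℝ) (v : U.obj (θ + 2 * Real.pi)),
        e θ (U.per θ v) = A.castM (C.partZ_shift θ) (e (θ + 2 * Real.pi) v))

/-- Transport between the values of `V` at representative points whose indices
agree modulo the period, using the periodicity isomorphism if needed. -/
def ptBridge (V : SRep k Q) (pt : ℤ → ℝ) (Nn : ℕ)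
    (hper : ∀ j : ℤ, pt (j + (Nn : ℤ)) = pt j + 2 * Real.pi) {a b : ℤ}
    (h : a = b ∨ a = b + (Nn : ℤ)) : V.obj (pt a) ≃ₗ[k] V.obj (pt b) :=
  if he : a = b then V.castO (congrArg pt he)
  else (V.castO (show pt a = pt b + 2 * Real.pi by
      rw [h.resolve_left he]; exact hper b)).trans (V.per (pt b))

lemma zmod_val_succ {N : ℕ} (hN : 2 ≤ N) (i : ZMod N) :
    (((i + 1 : ZMod N).val : ℤ) = (i.val : ℤ) + 1) ∨
      ((i.val : ℤ) + 1 = ((i + 1 : ZMod N).val : ℤ) + (N : ℤ)) := by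
  haveI : NeZero N := ⟨by omega⟩
  haveI : Fact (1 < N) := ⟨by omega⟩
  have hval : (i + 1 : ZMod N).val = (i.val + 1) % N := by
    rw [ZMod.val_add, ZMod.val_one]
  have hlt : i.val < N := ZMod.val_lt i
  rcases Nat.lt_or_ge (i.val + 1) N with h | h
  · left; rw [hval, Nat.mod_eq_of_lt h]; push_cast; ring
  · right
    have he : i.val + 1 = N := by omega
    rw [hval, he, Nat.mod_self]
    push_cast
    omega

/-- The auxiliary representation `M_V` of the auxiliary quiver of a partition `C`,
given by the values of `V` at the representative points `pt`. -/
def auxOfPoints (V : SRep k Q) (C : CircPartition Q) (o : ZMod C.N → Bool) (pt : ℤ → ℝ)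
    (hper : ∀ j : ℤ, pt (j + (C.N : ℤ)) = pt j + 2 * Real.pi)
    (hup : ∀ (i : ZMod C.N), o i = true → Q.covRel (pt (i.val : ℤ)) (pt ((i.val : ℤ) + 1)))
    (hdown : ∀ (i : ZMod C.N), o i = false → Q.covRel (pt ((i.val : ℤ) + 1)) (pt (i.val : ℤ))) :
    CycRep k C.N o where
  M i := V.obj (pt (i.val : ℤ))
  up i h := (V.ptBridge pt C.N hper
      ((zmod_val_succ C.hN i).imp Eq.symm id)).toLinearMap ∘ₗ V.map (hup i h)
  down i h := V.map (hdown i h) ∘ₗ (V.ptBridge pt C.N hper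
      ((zmod_val_succ C.hN i).imp Eq.symm id)).symm.toLinearMap

/-- `U` is the refinement of `V` with respect to the partition `C` and the choice
of representative points `pt`: `U(θ) = V(pt (partIdx θ))`, with structure maps
induced by those of `V` between representative points. -/
def RefinementOf (V : SRep k Q) (C : CircPartition Q) (pt : ℤ → ℝ)
    (hper : ∀ j : ℤ, pt (j + (C.N : ℤ)) = pt j + 2 * Real.pi) (U : SRep k Q) : Prop :=
  (∀ j, pt j ∈ C.J j) ∧
  ∃ e : ∀ θ, U.obj θ ≃ₗ[k] V.obj (pt (C.partIdx θ)),
    (∀ {θ φ : ℝ} (h : Q.covRel θ φ) (hp : C.partIdx θ = C.partIdx φ) (v : U.obj θ),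
        e φ (U.map h v) = V.castO (congrArg pt hp) (e θ v)) ∧
    (∀ {θ φ : ℝ} (h : Q.covRel θ φ)
        (hc : Q.covRel (pt (C.partIdx θ)) (pt (C.partIdx φ))) (v : U.obj θ),
        e φ (U.map h v) = V.map hc (e θ v)) ∧
    (∀ (θ : ℝ) (v : U.obj (θ + 2 * Real.pi)),
        e θ (U.per θ v) = V.per (pt (C.partIdx θ))
          ((V.castO (show pt (C.partIdx (θ + 2 * Real.pi)) = pt (C.partIdx θ) + 2 * Real.pi by
            rw [C.partIdx_shift θ]; exact hper _)) (e (θ + 2 * Real.pi) v)))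

end SRep
/-! ## The endomorphism ring -/

namespace SRep

variable {k : Type} [Field k] {Q : AtR}

/-- The endomorphism ring of a representation: the subring of
`∀ θ, End (V θ)` consisting of the natural families (with multiplication given by
pointwise composition). -/
def endSubring (V : SRep k Q) : Subring (∀ θ, Module.End k (V.obj θ)) where
  carrier := {f | IsHomFam V V f}
  mul_mem' := by
    rintro a b ⟨ha1, ha2⟩ ⟨hb1, hb2⟩
    constructor
    · intro θ φ h v
      simp only [Pi.mul_apply, Module.End.mul_apply]
      rw [hb1 h v, ha1 h]
    · intro θ v
      simp only [Pi.mul_apply, Module.End.mul_apply]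
      rw [hb2 θ v, ha2 θ]
  one_mem' := by
    constructor
    · intro θ φ h v; simp
    · intro θ v; simp
  add_mem' := by
    rintro a b ⟨ha1, ha2⟩ ⟨hb1, hb2⟩
    constructor
    · intro θ φ h v
      simp only [Pi.add_apply, LinearMap.add_apply]
      rw [ha1 h v, hb1 h v, map_add]
    · intro θ v
      simp only [Pi.add_apply, LinearMap.add_apply]
      rw [ha2 θ v, hb2 θ v, map_add]
  zero_mem' := by
    constructor
    · intro θ φ h v; simp
    · intro θ v; simp
  neg_mem' := by
    rintro a ⟨ha1, ha2⟩
    constructor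
    · intro θ φ h v
      simp only [Pi.neg_apply, LinearMap.neg_apply]
      rw [ha1 h v, map_neg]
    · intro θ v
      simp only [Pi.neg_apply, LinearMap.neg_apply]
      rw [ha2 θ v, map_neg]

end SRep

/-! ## Statement 6 -/

/-! ## Auxiliary material for Statement 6 -/

namespace AtR

lemma covRel_factor {Q : AtR} {θ φ x : ℝ} (h : Q.covRel θ φ)
    (h1 : min θ φ ≤ x) (h2 : x ≤ max θ φ) : Q.covRel θ x ∧ Q.covRel x φ := by
  unfold covRel at h ⊢
  by_cases hm : Q.m = 0
  · rw [if_pos hm] at h ⊢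
    rw [if_pos hm]
    rw [min_eq_left h] at h1
    rw [max_eq_right h] at h2
    exact ⟨h1, h2⟩
  · rw [if_neg hm] at h ⊢
    rw [if_neg hm]
    obtain ⟨j, hθ, hφ, dir⟩ := h
    rcases dir with ⟨he, hle⟩ | ⟨hodd, hle⟩
    · rw [min_eq_right hle] at h1
      rw [max_eq_left hle] at h2
      have hx : x ∈ Set.Icc (Q.α j) (Q.α (j + 1)) := ⟨le_trans hφ.1 h1, le_trans h2 hθ.2⟩
      exact ⟨⟨j, hθ, hx, Or.inl ⟨he, h2⟩⟩, ⟨j, hx, hφ, Or.inl ⟨he, h1⟩⟩⟩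
    · rw [min_eq_left hle] at h1
      rw [max_eq_right hle] at h2
      have hx : x ∈ Set.Icc (Q.α j) (Q.α (j + 1)) := ⟨le_trans hθ.1 h1, le_trans h2 hφ.2⟩
      exact ⟨⟨j, hθ, hx, Or.inr ⟨hodd, h1⟩⟩, ⟨j, hx, hφ, Or.inr ⟨hodd, h2⟩⟩⟩

end AtR

namespace CycRep

variable {k : Type} [Field k] {N : ℕ} {o : ZMod N → Bool} (A : CycRep k N o)

lemma castM_castM {i i' i'' : ZMod N} (h : i = i') (h' : i' = i'') (h'' : i = i'')
    (v : A.M i) : A.castM h' (A.castM h v) = A.castM h'' v := by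
  subst h; subst h'; rfl

lemma castM_self {i : ZMod N} (h : i = i) (v : A.M i) : A.castM h v = v := rfl

lemma castM_castM_castM {i i₂ i₃ i₄ : ZMod N} (h1 : i = i₂) (h2 : i₂ = i₃) (h3 : i₃ = i₄)
    (h4 : i = i₄) (v : A.M i) :
    A.castM h3 (A.castM h2 (A.castM h1 v)) = A.castM h4 v := by
  subst h1; subst h2; subst h3; rfl

lemma castM_symm_apply {i i' : ZMod N} (h : i = i') (h' : i' = i) (v : A.M i') :
    (A.castM h).symm v = A.castM h' v := by subst h; rfl

variable (hup : ∀ (i : ZMod N) (h : o i = true), Function.Bijective (A.up i h))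
variable (hdown : ∀ (i : ZMod N) (h : o i = false), Function.Bijective (A.down i h))

lemma stepC_castc {i i' : ZMod N} (h : i = i') (h1 : i + 1 = i' + 1) (v : A.M i) :
    A.stepC hup hdown i' (A.castM h v) = A.castM h1 (A.stepC hup hdown i v) := by
  subst h; rfl

/-- Crossing isomorphism, indexed by the integers. -/
def sigZ (j : ℤ) : A.M (j : ZMod N) ≃ₗ[k] A.M ((j + 1 : ℤ) : ZMod N) :=
  (A.stepC hup hdown (j : ZMod N)).trans (A.castM (by push_cast; ring))

lemma sigZ_castc {a b : ℤ} (hc : ((a : ZMod N)) = ((b : ZMod N)))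
    (hc1 : (((a + 1 : ℤ) : ZMod N)) = (((b + 1 : ℤ) : ZMod N))) (v : A.M (a : ZMod N)) :
    sigZ A hup hdown b (A.castM hc v) = A.castM hc1 (sigZ A hup hdown a v) := by
  simp only [sigZ, LinearEquiv.trans_apply]
  rw [A.stepC_castc hup hdown hc (by rw [hc]) v]
  rw [A.castM_castM _ _ (by push_cast; rw [hc])]
  rw [A.castM_castM _ _ (by push_cast; rw [hc])]

/-- Iterated upward crossing. -/
def uP : (j : ℤ) → (n : ℕ) → (A.M (j : ZMod N) ≃ₗ[k] A.M ((j + (n : ℤ) : ℤ) : ZMod N))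
  | j, 0 => A.castM (congrArg (fun z : ℤ => ((z : ZMod N))) (by (try simp only [Int.ofNat_eq_natCast, Int.negSucc_eq]); (try push_cast); (try omega)))
  | j, (n + 1) => ((uP j n).trans (sigZ A hup hdown (j + (n : ℤ)))).trans
      (A.castM (congrArg (fun z : ℤ => ((z : ZMod N))) (by push_cast; ring)))

lemma uP_castc {a b : ℤ} (n : ℕ) (hc : ((a : ZMod N)) = ((b : ZMod N)))
    (hc' : (((a + (n : ℤ) : ℤ) : ZMod N)) = (((b + (n : ℤ) : ℤ) : ZMod N)))
    (v : A.M (a : ZMod N)) :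
    uP A hup hdown b n (A.castM hc v) = A.castM hc' (uP A hup hdown a n v) := by
  induction n with
  | zero =>
      simp only [uP]
      rw [A.castM_castM _ _ (show ((a : ZMod N)) = (((b + ((0:ℕ) : ℤ) : ℤ) : ZMod N)) by
        push_cast at hc ⊢; rw [hc]; try ring)]
      rw [A.castM_castM _ _ (show ((a : ZMod N)) = (((b + ((0:ℕ) : ℤ) : ℤ) : ZMod N)) by
        push_cast at hc ⊢; rw [hc]; try ring)]
  | succ n IH =>
      simp only [uP, LinearEquiv.trans_apply]
      rw [IH (by push_cast at hc ⊢; rw [hc]; try ring)]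
      rw [sigZ_castc A hup hdown (a := a + (n : ℤ)) (b := b + (n : ℤ))
        (by push_cast at hc ⊢; rw [hc]; try ring) (by push_cast at hc ⊢; rw [hc]; try ring)]
      rw [A.castM_castM _ _ (by push_cast at hc ⊢; rw [hc]; try ring)]
      rw [A.castM_castM _ _ (by push_cast at hc ⊢; rw [hc]; try ring)]

/-- `P j` : transport from the base point `0` to `j`. -/
def PP : (j : ℤ) → (A.M (((0 : ℤ)) : ZMod N) ≃ₗ[k] A.M (j : ZMod N))
  | Int.ofNat n => (uP A hup hdown 0 n).trans
      (A.castM (congrArg (fun z : ℤ => ((z : ZMod N))) (by (try simp only [Int.ofNat_eq_natCast, Int.negSucc_eq]); (try push_cast); (try omega))))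
  | Int.negSucc n => ((uP A hup hdown (Int.negSucc n) (n + 1)).trans
      (A.castM (congrArg (fun z : ℤ => ((z : ZMod N))) (by (try simp only [Int.ofNat_eq_natCast, Int.negSucc_eq]); (try push_cast); (try omega))))).symm

lemma PP_congr {a b : ℤ} (h : a = b) (hc : ((a : ZMod N)) = ((b : ZMod N)))
    (v : A.M (((0 : ℤ)) : ZMod N)) :
    PP A hup hdown b v = A.castM hc (PP A hup hdown a v) := by
  subst h; rfl

lemma uP_left (j : ℤ) (n : ℕ)
    (hc : ((((j + 1) + (n : ℤ) : ℤ) : ZMod N)) = (((j + ((n + 1 : ℕ) : ℤ) : ℤ) : ZMod N)))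
    (w : A.M (j : ZMod N)) :
    uP A hup hdown j (n + 1) w =
      A.castM hc (uP A hup hdown (j + 1) n (sigZ A hup hdown j w)) := by
  induction n with
  | zero =>
      simp only [uP, LinearEquiv.trans_apply]
      rw [sigZ_castc A hup hdown (a := j) (b := j + ((0 : ℕ) : ℤ))
        (congrArg (fun z : ℤ => ((z : ZMod N))) (by (try simp only [Int.ofNat_eq_natCast, Int.negSucc_eq]); (try push_cast); (try omega)))
        (congrArg (fun z : ℤ => ((z : ZMod N))) (by (try simp only [Int.ofNat_eq_natCast, Int.negSucc_eq]); (try push_cast); (try omega)))]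
      rw [A.castM_castM _ _ (congrArg (fun z : ℤ => ((z : ZMod N))) (by (try simp only [Int.ofNat_eq_natCast, Int.negSucc_eq]); (try push_cast); (try omega)))]
      rw [A.castM_castM _ _ (congrArg (fun z : ℤ => ((z : ZMod N))) (by (try simp only [Int.ofNat_eq_natCast, Int.negSucc_eq]); (try push_cast); (try omega)))]
  | succ n IH =>
      show A.castM _ ((sigZ A hup hdown (j + ((n+1 : ℕ) : ℤ))) (uP A hup hdown j (n+1) w)) = _
      rw [IH (congrArg (fun z : ℤ => ((z : ZMod N))) (by (try simp only [Int.ofNat_eq_natCast, Int.negSucc_eq]); (try push_cast); (try omega)))]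
      rw [sigZ_castc A hup hdown (a := (j + 1) + (n : ℤ)) (b := j + ((n + 1 : ℕ) : ℤ))
        (congrArg (fun z : ℤ => ((z : ZMod N))) (by (try simp only [Int.ofNat_eq_natCast, Int.negSucc_eq]); (try push_cast); (try omega)))
        (congrArg (fun z : ℤ => ((z : ZMod N))) (by (try simp only [Int.ofNat_eq_natCast, Int.negSucc_eq]); (try push_cast); (try omega)))]
      show _ = A.castM hc (A.castM _ ((sigZ A hup hdown ((j+1) + (n : ℤ))) (uP A hup hdown (j+1) n (sigZ A hup hdown j w))))
      rw [A.castM_castM _ _ (congrArg (fun z : ℤ => ((z : ZMod N))) (by (try simp only [Int.ofNat_eq_natCast, Int.negSucc_eq]); (try push_cast); (try omega)))]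
      rw [A.castM_castM _ _ (congrArg (fun z : ℤ => ((z : ZMod N))) (by (try simp only [Int.ofNat_eq_natCast, Int.negSucc_eq]); (try push_cast); (try omega)))]

lemma PP_succ (j : ℤ) (v : A.M (((0 : ℤ)) : ZMod N)) :
    PP A hup hdown (j + 1) v = sigZ A hup hdown j (PP A hup hdown j v) := by
  cases j with
  | ofNat n =>
      show PP A hup hdown (Int.ofNat (n + 1)) v = _
      simp only [PP, uP, LinearEquiv.trans_apply]
      rw [sigZ_castc A hup hdown (a := 0 + (n : ℤ)) (b := Int.ofNat n)
        (congrArg (fun z : ℤ => ((z : ZMod N))) (by (try simp only [Int.ofNat_eq_natCast, Int.negSucc_eq]); (try push_cast); (try omega)))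
        (congrArg (fun z : ℤ => ((z : ZMod N))) (by (try simp only [Int.ofNat_eq_natCast, Int.negSucc_eq]); (try push_cast); (try omega)))]
      rw [A.castM_castM _ _ (congrArg (fun z : ℤ => ((z : ZMod N))) (by (try simp only [Int.ofNat_eq_natCast, Int.negSucc_eq]); (try push_cast); (try omega)))]
  | negSucc n =>
      generalize hgen : PP A hup hdown (Int.negSucc n) v = y
      have hy : ((uP A hup hdown (Int.negSucc n) (n + 1)).trans
          (A.castM (congrArg (fun z : ℤ => ((z : ZMod N))) (by (try simp only [Int.ofNat_eq_natCast, Int.negSucc_eq]); (try push_cast); (try omega))))) y = v := by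
        rw [← hgen]
        exact LinearEquiv.apply_symm_apply _ v
      rw [← hy]
      cases n with
      | zero =>
          show PP A hup hdown (Int.ofNat 0) _ = _
          simp only [PP, uP, LinearEquiv.trans_apply]
          rw [sigZ_castc A hup hdown (a := Int.negSucc 0) (b := Int.negSucc 0 + ((0 : ℕ) : ℤ))
            (congrArg (fun z : ℤ => ((z : ZMod N))) (by (try simp only [Int.ofNat_eq_natCast, Int.negSucc_eq]); (try push_cast); (try omega)))
            (congrArg (fun z : ℤ => ((z : ZMod N))) (by (try simp only [Int.ofNat_eq_natCast, Int.negSucc_eq]); (try push_cast); (try omega)))]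
          rfl
      | succ m =>
          show PP A hup hdown (Int.negSucc m) _ = _
          simp only [PP, LinearEquiv.trans_apply, LinearEquiv.symm_trans_apply]
          rw [LinearEquiv.symm_apply_eq, LinearEquiv.symm_apply_eq]
          rw [uP_left A hup hdown (Int.negSucc (m + 1)) (m + 1)
            (congrArg (fun z : ℤ => ((z : ZMod N))) (by (try simp only [Int.ofNat_eq_natCast, Int.negSucc_eq]); (try push_cast); (try omega)))]
          rw [A.castM_castM _ _ (congrArg (fun z : ℤ => ((z : ZMod N))) (by (try simp only [Int.ofNat_eq_natCast, Int.negSucc_eq]); (try push_cast); (try omega)))]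
          rfl

/-- Canonical transport from `j` to `j'`. -/
def trM (j j' : ℤ) : A.M (j : ZMod N) ≃ₗ[k] A.M ((j' : ℤ) : ZMod N) :=
  ((PP A hup hdown j).symm).trans (PP A hup hdown j')

lemma trM_comp (j j' j'' : ℤ) (v : A.M (j : ZMod N)) :
    trM A hup hdown j' j'' (trM A hup hdown j j' v) = trM A hup hdown j j'' v := by
  simp [trM]

lemma trM_self (j : ℤ) (v : A.M (j : ZMod N)) : trM A hup hdown j j v = v := by
  simp [trM]

lemma trM_congr {c d : ℤ} (j : ℤ) (h : c = d) (hc : ((c : ZMod N)) = ((d : ZMod N)))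
    (v : A.M (j : ZMod N)) :
    trM A hup hdown j d v = A.castM hc (trM A hup hdown j c v) := by
  subst h; rfl

lemma trM_succ (j : ℤ) (v : A.M (j : ZMod N)) :
    trM A hup hdown j (j + 1) v = sigZ A hup hdown j v := by
  simp only [trM, LinearEquiv.trans_apply]
  rw [PP_succ, LinearEquiv.apply_symm_apply]

lemma trM_of_eq {j j' : ℤ} (h : j = j') (hc : ((j : ZMod N)) = ((j' : ZMod N)))
    (v : A.M (j : ZMod N)) : trM A hup hdown j j' v = A.castM hc v := by
  subst h; rw [trM_self]; rfl

lemma trM_symm_apply (j j' : ℤ) (v : A.M ((j' : ℤ) : ZMod N)) :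
    (trM A hup hdown j j').symm v = trM A hup hdown j' j v := by
  simp [trM]

lemma trM_eq_uP (j : ℤ) (n : ℕ) (v : A.M (j : ZMod N)) :
    trM A hup hdown j (j + (n : ℤ)) v = uP A hup hdown j n v := by
  induction n with
  | zero =>
      rw [trM_of_eq A hup hdown (by omega)
        (congrArg (fun z : ℤ => ((z : ZMod N))) (by (try simp only [Int.ofNat_eq_natCast, Int.negSucc_eq]); (try push_cast); (try omega)))]
      simp only [uP]
  | succ n IH =>
      rw [trM_congr A hup hdown j (show (j + (n : ℤ)) + 1 = j + ((n + 1 : ℕ) : ℤ) by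
        push_cast; ring) (congrArg (fun z : ℤ => ((z : ZMod N))) (by push_cast; ring))]
      rw [← trM_comp A hup hdown j (j + (n : ℤ)), trM_succ, IH]
      simp only [uP, LinearEquiv.trans_apply]

lemma trM_shiftc_le {j j' a b : ℤ} (hle : j ≤ j')
    (hja : ((j : ZMod N)) = ((a : ZMod N))) (hjb : ((j' : ZMod N)) = ((b : ZMod N)))
    (hd : j' - j = b - a) (v : A.M (j : ZMod N)) :
    trM A hup hdown a b (A.castM hja v) = A.castM hjb (trM A hup hdown j j' v) := by
  set n : ℕ := (j' - j).toNat with hn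
  have hj' : j' = j + (n : ℤ) := by omega
  have hb : b = a + (n : ℤ) := by omega
  rw [trM_congr A hup hdown a hb.symm
    (congrArg (fun z : ℤ => ((z : ZMod N))) hb.symm)]
  rw [trM_eq_uP]
  rw [uP_castc A hup hdown n hja (by push_cast at hja ⊢; rw [hja])]
  rw [← trM_eq_uP]
  rw [trM_congr A hup hdown j hj'.symm
    (congrArg (fun z : ℤ => ((z : ZMod N))) hj'.symm)]
  rw [A.castM_castM _ _ (by rw [← hj', hjb]), A.castM_castM _ _ (by rw [← hj', hjb])]

lemma trM_shiftc {j j' a b : ℤ}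
    (hja : ((j : ZMod N)) = ((a : ZMod N))) (hjb : ((j' : ZMod N)) = ((b : ZMod N)))
    (hd : j' - j = b - a) (v : A.M (j : ZMod N)) :
    trM A hup hdown a b (A.castM hja v) = A.castM hjb (trM A hup hdown j j' v) := by
  rcases le_or_gt j j' with hle | hlt
  · exact trM_shiftc_le A hup hdown hle hja hjb hd v
  · have key := trM_shiftc_le A hup hdown (le_of_lt hlt) hjb hja (by omega)
      (trM A hup hdown j j' v)
    rw [trM_comp, trM_self] at key
    apply (trM A hup hdown b a).injective
    rw [trM_comp, key]
    rw [trM_of_eq A hup hdown rfl rfl, A.castM_castM _ _ hja]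

lemma zigC_eq_trM (n : ℕ) (h0 : ((0 : ZMod N)) = (((0 : ℤ)) : ZMod N))
    (hn : (((n : ℕ) : ZMod N)) = ((((n : ℕ) : ℤ) : ZMod N))) (v : A.M 0) :
    A.castM hn (A.zigC hup hdown n v) = trM A hup hdown 0 ((n : ℕ) : ℤ) (A.castM h0 v) := by
  induction n with
  | zero =>
      rw [trM_of_eq A hup hdown (by omega)
        (congrArg (fun z : ℤ => ((z : ZMod N))) (by (try simp only [Int.ofNat_eq_natCast, Int.negSucc_eq]); (try push_cast); (try omega)))]
      simp only [zigC]
      rw [A.castM_castM _ _ (by push_cast; rfl)]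
      rw [A.castM_castM _ _ (by push_cast; rfl)]
  | succ n IH =>
      simp only [zigC, LinearEquiv.trans_apply]
      rw [trM_congr A hup hdown 0 (show ((n : ℕ) : ℤ) + 1 = ((n + 1 : ℕ) : ℤ) by push_cast; ring)
        (congrArg (fun z : ℤ => ((z : ZMod N))) (by push_cast; ring))]
      rw [← trM_comp A hup hdown 0 ((n : ℕ) : ℤ), trM_succ]
      rw [← IH (by push_cast; rfl)]
      show A.castM hn (A.castM _ (A.stepC hup hdown _ (A.zigC hup hdown n v))) = _
      rw [A.castM_castM _ _ (by push_cast; rfl)]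
      have hs := A.stepC_castc hup hdown (i := ((n : ℕ) : ZMod N)) (i' := (((n : ℕ) : ℤ) : ZMod N))
        (by push_cast; rfl) (by push_cast; rfl) (A.zigC hup hdown n v)
      simp only [sigZ, LinearEquiv.trans_apply]
      rw [hs]
      rw [A.castM_castM _ _ (by push_cast; try rfl; try ring)]
      rw [A.castM_castM _ _ (by push_cast; try rfl; try ring)]

lemma trM_one_up {j j' : ℤ} (hj : j' = j + 1) (ht : o ((j : ZMod N)) = true)
    (hc : ((j : ZMod N)) + 1 = ((j' : ZMod N))) (v : A.M (j : ZMod N)) :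
    trM A hup hdown j j' v = A.castM hc (A.up ((j : ZMod N)) ht v) := by
  subst hj
  rw [trM_succ]
  simp only [sigZ, LinearEquiv.trans_apply, stepC]
  rw [dif_pos ht]
  rfl

lemma trM_one_down {j j' : ℤ} (hj : j = j' + 1) (hf : o ((j' : ZMod N)) = false)
    (hc : ((j : ZMod N)) = ((j' : ZMod N)) + 1) (v : A.M (j : ZMod N)) :
    trM A hup hdown j j' v = A.down ((j' : ZMod N)) hf (A.castM hc v) := by
  subst hj
  rw [show trM A hup hdown (j' + 1) j' v = (trM A hup hdown j' (j' + 1)).symm v from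
    (trM_symm_apply A hup hdown j' (j' + 1) v).symm]
  rw [LinearEquiv.symm_apply_eq, trM_succ]
  simp only [sigZ, LinearEquiv.trans_apply, stepC]
  rw [dif_neg (by rw [hf]; simp)]
  rw [show A.down ((j' : ZMod N)) hf (A.castM hc v) =
    (LinearEquiv.ofBijective (A.down ((j' : ZMod N))
      (by rw [hf] : o ((j' : ZMod N)) = false)) (hdown _ _)) (A.castM hc v) from rfl]
  rw [LinearEquiv.symm_apply_apply]
  rw [A.castM_castM _ _ rfl, A.castM_self]

/-- The key conjugation: the monodromy at the basepoint `0` is conjugate (via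
transport) to the once-around transport at any `p0`. -/
lemma monodromyC_trM (p0 : ℤ) (h0 : ((0 : ZMod N)) = (((0 : ℤ)) : ZMod N))
    (H : ((((p0 + (N : ℤ)) : ℤ) : ZMod N)) = (((p0 : ℤ)) : ZMod N)) (w : A.M 0) :
    trM A hup hdown 0 p0 (A.castM h0 (A.monodromyC hup hdown w)) =
      A.castM H (trM A hup hdown 0 (p0 + (N : ℤ)) (A.castM h0 w)) := by
  have hz := zigC_eq_trM A hup hdown N h0 (by push_cast; rfl) w
  have hstep : A.castM h0 (A.monodromyC hup hdown w) =
      A.castM (show ((((N : ℕ) : ℤ) : ZMod N)) = (((0 : ℤ) : ZMod N)) by push_cast; simp)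
        (A.castM (show (((N : ℕ) : ZMod N)) = ((((N : ℕ) : ℤ) : ZMod N)) by push_cast; rfl)
          (A.zigC hup hdown N w)) := by
    simp only [monodromyC, LinearEquiv.trans_apply]
    rw [A.castM_castM _ _ (show (((N : ℕ) : ZMod N)) = (((0 : ℤ) : ZMod N)) by push_cast; simp)]
    rw [A.castM_castM _ _ (show (((N : ℕ) : ZMod N)) = (((0 : ℤ) : ZMod N)) by push_cast; simp)]
  rw [hstep, hz]
  have hsh := trM_shiftc A hup hdown (j := ((N : ℕ) : ℤ)) (j' := p0 + (N : ℤ)) (a := 0)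
    (b := p0) (by push_cast; simp) (by push_cast; simp) (by ring)
    (trM A hup hdown 0 ((N : ℕ) : ℤ) (A.castM h0 w))
  rw [hsh, trM_comp]

end CycRep

/-! ## Statement 6 -/

/-- If the auxiliary quiver of the partition `C` is the `Ã_{N-1}` quiver with
orientation `o` and `M` is a Jordan cell representation of it, then its push down
is a Jordan cell of the continuous quiver. -/
theorem pushdown_jordan {k : Type} [Field k] {Q : AtR} (C : CircPartition Q)
    (o : ZMod C.N → Bool)
    (ho : ∀ j : ℤ, ((o (j : ZMod C.N) = true) ↔ C.dirUp j) ∧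
      ((o (j : ZMod C.N) = false) ↔ C.dirDown j))
    (M : CycRep k C.N o) (hM : CycRep.IsJordan M)
    (U : SRep k Q) (hU : SRep.PushdownOf C o M U) : SRep.IsJordanCell U := by
  classical
  obtain ⟨e, he1, he2, he3, he4⟩ := hU
  -- the transport lemma
  have key : ∀ (n : ℕ) {θ φ : ℝ} (h : Q.covRel θ φ),
      (C.partIdx φ - C.partIdx θ).natAbs = n → ∀ v : U.obj θ,
      e φ (U.map h v) =
        CycRep.trM M hM.bijUp hM.bijDown (C.partIdx θ) (C.partIdx φ) (e θ v) := by
    intro n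
    induction n using Nat.strong_induction_on with
    | _ n IH =>
      intro θ φ h hn v
      rcases eq_or_ne (C.partIdx θ) (C.partIdx φ) with h0 | hne
      · rw [he1 h h0 v]
        exact (CycRep.trM_of_eq M hM.bijUp hM.bijDown h0 (congrArg _ h0) (e θ v)).symm
      · by_cases hp1 : C.partIdx φ = C.partIdx θ + 1
        · have hto : o ((C.partIdx θ : ZMod C.N)) = true := (ho (C.partIdx θ)).1.mpr
            ⟨θ, C.mem_partIdx θ, φ, by rw [← hp1]; exact C.mem_partIdx φ, h⟩
          rw [he2 h hp1 hto v]
          exact (CycRep.trM_one_up M hM.bijUp hM.bijDown hp1 hto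
            (by rw [hp1]; push_cast; ring) (e θ v)).symm
        · by_cases hm1 : C.partIdx θ = C.partIdx φ + 1
          · have hfo : o ((C.partIdx φ : ZMod C.N)) = false := (ho (C.partIdx φ)).2.mpr
              ⟨θ, by rw [← hm1]; exact C.mem_partIdx θ, φ, C.mem_partIdx φ, h⟩
            rw [he3 h hm1 hfo v]
            exact (CycRep.trM_one_down M hM.bijUp hM.bijDown hm1 hfo
              (by rw [hm1]; push_cast; ring) (e θ v)).symm
          · rcases lt_or_gt_of_ne hne with hlt | hgt
            · obtain ⟨x, hxJ⟩ := C.nonempty (C.partIdx θ + 1)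
              have hθx : θ < x := C.ordered (lt_add_one _) θ (C.mem_partIdx θ) x hxJ
              have hxφ : x < φ := C.ordered (by omega) x hxJ φ (C.mem_partIdx φ)
              have hθφ : θ ≤ φ := le_of_lt (lt_trans hθx hxφ)
              obtain ⟨h1, h2⟩ := AtR.covRel_factor (x := x) h
                (by rw [min_eq_left hθφ]; exact le_of_lt hθx)
                (by rw [max_eq_right hθφ]; exact le_of_lt hxφ)
              have hpx : C.partIdx x = C.partIdx θ + 1 := C.partIdx_eq hxJ
              rw [U.map_comp h1 h2 h]
              simp only [LinearMap.coe_comp, Function.comp_apply]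
              rw [IH (C.partIdx φ - C.partIdx x).natAbs (by omega) (θ := x) (φ := φ) h2 rfl]
              rw [IH (C.partIdx x - C.partIdx θ).natAbs (by omega) (θ := θ) (φ := x) h1 rfl]
              exact CycRep.trM_comp M _ _ _ _ _ _
            · obtain ⟨x, hxJ⟩ := C.nonempty (C.partIdx φ + 1)
              have hφx : φ < x := C.ordered (lt_add_one _) φ (C.mem_partIdx φ) x hxJ
              have hxθ : x < θ := C.ordered (by omega) x hxJ θ (C.mem_partIdx θ)
              have hφθ : φ ≤ θ := le_of_lt (lt_trans hφx hxθ)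
              obtain ⟨h1, h2⟩ := AtR.covRel_factor (x := x) h
                (by rw [min_eq_right hφθ]; exact le_of_lt hφx)
                (by rw [max_eq_left hφθ]; exact le_of_lt hxθ)
              have hpx : C.partIdx x = C.partIdx φ + 1 := C.partIdx_eq hxJ
              rw [U.map_comp h1 h2 h]
              simp only [LinearMap.coe_comp, Function.comp_apply]
              rw [IH (C.partIdx φ - C.partIdx x).natAbs (by omega) (θ := x) (φ := φ) h2 rfl]
              rw [IH (C.partIdx x - C.partIdx θ).natAbs (by omega) (θ := θ) (φ := x) h1 rfl]
              exact CycRep.trM_comp M _ _ _ _ _ _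
  -- bijectivity of all structure maps
  have bijU : ∀ ⦃θ φ : ℝ⦄ (h : Q.covRel θ φ), Function.Bijective (U.map h) := by
    intro θ φ h
    have hfun : ⇑(U.map h) = ⇑(((e θ).trans
        (CycRep.trM M hM.bijUp hM.bijDown (C.partIdx θ) (C.partIdx φ))).trans (e φ).symm) := by
      funext v
      show U.map h v = (e φ).symm (CycRep.trM M hM.bijUp hM.bijDown (C.partIdx θ) (C.partIdx φ) (e θ v))
      apply (e φ).injective
      rw [key _ h rfl v]
      exact ((e φ).apply_symm_apply _).symm
    rw [hfun]
    exact LinearEquiv.bijective _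
  -- inverse transport
  have keyInv : ∀ {θ φ : ℝ} (h : Q.covRel θ φ) (bb : Function.Bijective (U.map h))
      (w : U.obj φ), e θ ((LinearEquiv.ofBijective (U.map h) bb).symm w) =
        CycRep.trM M hM.bijUp hM.bijDown (C.partIdx φ) (C.partIdx θ) (e φ w) := by
    intro θ φ h bb w
    have h1 := key _ h rfl ((LinearEquiv.ofBijective (U.map h) bb).symm w)
    have h2 : U.map h ((LinearEquiv.ofBijective (U.map h) bb).symm w) = w :=
      (LinearEquiv.ofBijective (U.map h) bb).apply_symm_apply w
    rw [h2] at h1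
    rw [h1]; exact ((CycRep.trM_comp M _ _ _ _ _ _).trans (CycRep.trM_self M _ _ _ _)).symm
  -- transport of the cast maps
  have ecast : ∀ {θ φ : ℝ} (hh : θ = φ) (hc : C.partZ θ = C.partZ φ) (v : U.obj θ),
      e φ (U.castO hh v) = M.castM hc (e θ v) := by
    intro θ φ hh hc v; subst hh; rfl
  -- conjugation of the zig-zag
  have zconj : ∀ (n : ℕ) (v : U.obj (Q.α 0)),
      e (Q.α ((n : ℕ) : ℤ)) (U.zig bijU n v) =
        CycRep.trM M hM.bijUp hM.bijDown (C.partIdx (Q.α 0))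
          (C.partIdx (Q.α ((n : ℕ) : ℤ))) (e (Q.α 0) v) := by
    intro n
    induction n with
    | zero =>
        intro v
        simp only [SRep.zig]
        rw [ecast _ (congrArg C.partZ (congrArg Q.α (by norm_num)))]
        exact (CycRep.trM_of_eq M hM.bijUp hM.bijDown
          (congrArg C.partIdx (congrArg Q.α (by norm_num)))
          (congrArg _ (congrArg C.partIdx (congrArg Q.α (by norm_num)))) _).symm
    | succ n IHn =>
        intro v
        simp only [SRep.zig, LinearEquiv.trans_apply]
        rw [ecast _ (congrArg C.partZ (congrArg Q.α (by push_cast; ring)))]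
        unfold SRep.step
        by_cases hcc : Q.m = 0 ∨ ¬ Even ((n : ℕ) : ℤ)
        · rw [dif_pos hcc]
          rw [show ((LinearEquiv.ofBijective (U.map (AtR.covRel_up _ hcc)) (bijU _))
              (U.zig bijU n v)) = U.map (AtR.covRel_up _ hcc) (U.zig bijU n v) from rfl]
          rw [key _ _ rfl, IHn v, CycRep.trM_comp (v := e (Q.α 0) v)]
          exact (CycRep.trM_congr M hM.bijUp hM.bijDown _
            (show C.partIdx (Q.α (((n : ℕ) : ℤ) + 1)) = C.partIdx (Q.α (((n + 1 : ℕ)) : ℤ))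
              from congrArg C.partIdx (congrArg Q.α (by push_cast; ring)))
            (congrArg _ (congrArg C.partIdx (congrArg Q.α (by push_cast; ring)))) _).symm
        · rw [dif_neg hcc]
          rw [keyInv _ _ (U.zig bijU n v), IHn v, CycRep.trM_comp (v := e (Q.α 0) v)]
          exact (CycRep.trM_congr M hM.bijUp hM.bijDown _
            (show C.partIdx (Q.α (((n : ℕ) : ℤ) + 1)) = C.partIdx (Q.α (((n + 1 : ℕ)) : ℤ))
              from congrArg C.partIdx (congrArg Q.α (by push_cast; ring)))
            (congrArg _ (congrArg C.partIdx (congrArg Q.α (by push_cast; ring)))) _).symm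
  -- index bookkeeping
  have hpN : C.partIdx (Q.α ((Q.periodN : ℕ) : ℤ)) = C.partIdx (Q.α 0) + (C.N : ℤ) := by
    have h1 : C.partIdx (Q.α ((Q.periodN : ℕ) : ℤ)) = C.partIdx (Q.α 0 + 2 * Real.pi) :=
      congrArg C.partIdx Q.α_periodN
    rw [h1, C.partIdx_shift]
  -- conjugation of the monodromy
  have hmono : ∀ v : U.obj (Q.α 0), e (Q.α 0) (U.monodromy bijU v) =
      M.castM (show (((C.partIdx (Q.α 0) + (C.N : ℤ) : ℤ)) : ZMod C.N) = C.partZ (Q.α 0) by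
        unfold CircPartition.partZ; push_cast; simp)
        (CycRep.trM M hM.bijUp hM.bijDown (C.partIdx (Q.α 0))
          (C.partIdx (Q.α 0) + (C.N : ℤ)) (e (Q.α 0) v)) := by
    intro v
    simp only [SRep.monodromy, LinearEquiv.trans_apply]
    rw [he4, ecast Q.α_periodN (congrArg C.partZ Q.α_periodN), zconj Q.periodN v]
    rw [CycRep.trM_congr M hM.bijUp hM.bijDown (C.partIdx (Q.α 0)) hpN.symm
      (congrArg _ hpN.symm) (e (Q.α 0) v)]
    exact M.castM_castM_castM _ _ _ _ _
  -- the conjugating isomorphism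
  have h00 : (0 : ZMod C.N) = (((0 : ℤ)) : ZMod C.N) := by norm_num
  set g : M.M 0 ≃ₗ[k] U.obj (Q.α 0) := ((M.castM h00).trans
    (CycRep.trM M hM.bijUp hM.bijDown 0 (C.partIdx (Q.α 0)))).trans (e (Q.α 0)).symm with hgdef
  have hge : ∀ x : M.M 0, e (Q.α 0) (g x) =
      CycRep.trM M hM.bijUp hM.bijDown 0 (C.partIdx (Q.α 0)) (M.castM h00 x) := by
    intro x
    rw [hgdef]
    exact (e (Q.α 0)).apply_symm_apply _
  have hg : ∀ w : M.M 0, g (M.monodromyC hM.bijUp hM.bijDown w) = U.monodromy bijU (g w) := by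
    intro w
    apply (e (Q.α 0)).injective
    rw [hge, hmono (g w), hge w, CycRep.trM_comp]
    exact CycRep.monodromyC_trM M hM.bijUp hM.bijDown (C.partIdx (Q.α 0)) h00 _ w
  refine ⟨bijU, ?_, ?_⟩
  · obtain ⟨d, hd1, hd2⟩ := hM.dim
    exact ⟨d, hd1, fun θ => by rw [LinearEquiv.finrank_eq (e θ)]; exact hd2 _⟩
  · intro U' W' hcompl hU' hW'
    set σ := Submodule.orderIsoMapComap g with hσ
    have hcompl0 : IsCompl (σ.symm U') (σ.symm W') := σ.symm.isCompl hcompl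
    have inv0 : ∀ P' : Submodule k (U.obj (Q.α 0)),
        (∀ u ∈ P', U.monodromy bijU u ∈ P') →
        ∀ u ∈ σ.symm P', M.monodromyC hM.bijUp hM.bijDown u ∈ σ.symm P' := by
      intro P' hP' u hu
      rw [hσ, Submodule.orderIsoMapComap_symm_apply, Submodule.mem_comap] at hu ⊢
      show g (M.monodromyC hM.bijUp hM.bijDown u) ∈ P'
      rw [hg u]
      exact hP' _ hu
    rcases hM.indec (σ.symm U') (σ.symm W') hcompl0 (inv0 U' hU') (inv0 W' hW') with h | h
    · left
      have : U' = σ (σ.symm U') := (σ.apply_symm_apply U').symm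
      rw [this, h]
      rw [hσ, Submodule.orderIsoMapComap_apply]
      exact Submodule.map_bot _
    · right
      have : W' = σ (σ.symm W') := (σ.apply_symm_apply W').symm
      rw [this, h]
      rw [hσ, Submodule.orderIsoMapComap_apply]
      exact Submodule.map_bot _
end
end

section
/- Every bar of Ã_ℝ and every Jordan cell of Ã_ℝ is an indecomposable representation of Ã_ℝ. -/
open Set

noncomputable section

variable (k : Type) [Field k]

variable {k}

variable (k : Type) [Field k]

variable {k}

/-! ## Auxiliary lemmas for the main theorem -/

namespace AtR

variable {Q : AtR}

lemma two_pi_pos : (0:ℝ) < 2 * Real.pi := by positivity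

lemma alpha_succ_lt (hm : Q.m ≠ 0) (j : ℤ) : Q.α (j + 1) < Q.α j + 2 * Real.pi := by
  have h1 : Q.α (j + 1) ≤ Q.α (j + 2 * Q.m - 1) := Q.mono.monotone (by omega)
  have h2 : Q.α (j + 2 * Q.m - 1) < Q.α (j + 2 * Q.m) := Q.mono (by omega)
  have h3 := Q.per hm j
  linarith

lemma covRel_diff_lt (hm : Q.m ≠ 0) {x y : ℝ} (h : Q.covRel x y) :
    y - x < 2 * Real.pi ∧ x - y < 2 * Real.pi := by
  unfold covRel at h
  rw [if_neg hm] at h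
  obtain ⟨j, hx, hy, -⟩ := h
  have := alpha_succ_lt hm j
  exact ⟨by linarith [hx.1, hy.2], by linarith [hy.1, hx.2]⟩

lemma even_shift (j : ℤ) : Even (j + 2 * (Q.m:ℤ)) ↔ Even j := by
  constructor
  · intro h; have := h.sub (even_two_mul (Q.m:ℤ)); simpa using this
  · intro h; exact h.add (even_two_mul (Q.m:ℤ))

lemma covRel_shift_iff {x y : ℝ} :
    Q.covRel (x + 2 * Real.pi) (y + 2 * Real.pi) ↔ Q.covRel x y := by
  unfold covRel
  by_cases hm : Q.m = 0
  · rw [if_pos hm, if_pos hm]; constructor <;> intro h <;> linarith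
  · rw [if_neg hm, if_neg hm]
    have key : ∀ j : ℤ, ∀ z : ℝ, z ∈ Set.Icc (Q.α j) (Q.α (j+1)) ↔
        z + 2 * Real.pi ∈ Set.Icc (Q.α (j + 2*Q.m)) (Q.α (j + 2*Q.m + 1)) := by
      intro j z
      have h1 := Q.per hm j
      have h2 := Q.per hm (j + 1)
      rw [show j + 1 + 2*(Q.m:ℤ) = j + 2*Q.m + 1 by ring] at h2
      rw [h1, h2]
      constructor <;> rintro ⟨u, v⟩ <;> exact ⟨by linarith, by linarith⟩
    constructor
    · rintro ⟨j, hx, hy, hp⟩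
      refine ⟨j - 2 * Q.m, ?_, ?_, ?_⟩
      · rw [key (j - 2*Q.m) x, show j - 2*(Q.m:ℤ) + 2*Q.m = j by ring]; exact hx
      · rw [key (j - 2*Q.m) y, show j - 2*(Q.m:ℤ) + 2*Q.m = j by ring]; exact hy
      · have he : Even (j - 2 * (Q.m:ℤ)) ↔ Even j := by
          have h5 := even_shift (Q := Q) (j - 2 * (Q.m:ℤ))
          rw [show j - 2*(Q.m:ℤ) + 2*(Q.m:ℤ) = j by ring] at h5
          exact h5.symm
        rcases hp with ⟨h1, h2⟩ | ⟨h1, h2⟩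
        · exact Or.inl ⟨he.mpr h1, by linarith⟩
        · exact Or.inr ⟨fun c => h1 (he.mp c), by linarith⟩
    · rintro ⟨j, hx, hy, hp⟩
      refine ⟨j + 2 * Q.m, (key j x).mp hx, (key j y).mp hy, ?_⟩
      rcases hp with ⟨h1, h2⟩ | ⟨h1, h2⟩
      · exact Or.inl ⟨(even_shift j).mpr h1, by linarith⟩
      · exact Or.inr ⟨fun c => h1 ((even_shift j).mp c), by linarith⟩

lemma covRel_shift_int {x y : ℝ} (h : Q.covRel x y) (n : ℤ) :
    Q.covRel (x + 2 * Real.pi * n) (y + 2 * Real.pi * n) := by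
  induction n using Int.induction_on with
  | zero => simpa using h
  | succ n ih =>
      push_cast
      have h2 := covRel_shift_iff.mpr ih
      push_cast at h2
      have e1 : x + 2*Real.pi*(n:ℝ) + 2*Real.pi = x + 2*Real.pi*((n:ℝ)+1) := by ring
      have e2 : y + 2*Real.pi*(n:ℝ) + 2*Real.pi = y + 2*Real.pi*((n:ℝ)+1) := by ring
      rwa [e1, e2] at h2
  | pred n ih =>
      push_cast
      push_cast at ih
      have h2 := covRel_shift_iff.mp (show Q.covRel
          ((x + 2*Real.pi*(-(n:ℝ)-1)) + 2*Real.pi) ((y + 2*Real.pi*(-(n:ℝ)-1)) + 2*Real.pi) by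
        have e1 : (x + 2*Real.pi*(-(n:ℝ)-1)) + 2*Real.pi = x + 2*Real.pi*(-(n:ℝ)) := by ring
        have e2 : (y + 2*Real.pi*(-(n:ℝ)-1)) + 2*Real.pi = y + 2*Real.pi*(-(n:ℝ)) := by ring
        rw [e1, e2]; exact ih)
      exact h2

lemma alpha_add_nat (hm : Q.m ≠ 0) (j : ℤ) (N : ℕ) :
    Q.α (j + 2 * Q.m * N) = Q.α j + 2 * Real.pi * N := by
  induction N with
  | zero => simp
  | succ N ih =>
      have h := Q.per hm (j + 2 * Q.m * N)
      rw [show j + 2*(Q.m:ℤ)*(N:ℕ) + 2*Q.m = j + 2*Q.m*(((N+1:ℕ)):ℤ) by push_cast; ring] at h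
      rw [h, ih]
      push_cast; ring

lemma alpha_sub_nat (hm : Q.m ≠ 0) (j : ℤ) (N : ℕ) :
    Q.α (j - 2 * Q.m * N) = Q.α j - 2 * Real.pi * N := by
  have := alpha_add_nat hm (j - 2 * Q.m * N) N
  rw [show j - 2*(Q.m:ℤ)*N + 2*Q.m*N = j by ring] at this
  linarith

lemma exists_arc (Q : AtR) (x : ℝ) : ∃ t : ℤ, Q.α t ≤ x ∧ x < Q.α (t + 1) := by
  by_cases hm : Q.m = 0
  · have h3 : Real.pi * (x / Real.pi) = x := by field_simp
    refine ⟨⌊x / Real.pi⌋, ?_, ?_⟩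
    · rw [Q.cyc hm]
      have h := Int.floor_le (x / Real.pi)
      nlinarith [Real.pi_pos]
    · rw [Q.cyc hm]
      have h := Int.lt_floor_add_one (x / Real.pi)
      push_cast
      nlinarith [Real.pi_pos]
  · have hne : ∃ j : ℤ, Q.α j ≤ x := by
      obtain ⟨N, hN⟩ := exists_nat_ge ((Q.α 0 - x) / (2 * Real.pi))
      refine ⟨0 - 2 * Q.m * N, ?_⟩
      rw [alpha_sub_nat hm 0 N]
      rw [div_le_iff₀ two_pi_pos] at hN
      linarith
    have hbd : ∃ b : ℤ, ∀ z : ℤ, Q.α z ≤ x → z ≤ b := by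
      obtain ⟨N, hN⟩ := exists_nat_ge ((x - Q.α 0) / (2 * Real.pi))
      refine ⟨2 * Q.m * (N+1), fun z hz => ?_⟩
      by_contra hc
      push_neg at hc
      have h1 : Q.α (0 + 2 * Q.m * ((N+1:ℕ):ℤ)) ≤ Q.α z := Q.mono.monotone (by push_cast; omega)
      rw [alpha_add_nat hm 0 (N+1)] at h1
      rw [div_le_iff₀ two_pi_pos] at hN
      push_cast at h1 ⊢
      nlinarith [two_pi_pos]
    obtain ⟨t, ht, hub⟩ := Int.exists_greatest_of_bdd hbd hne
    refine ⟨t, ht, ?_⟩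
    by_contra hc
    push_neg at hc
    have := hub (t+1) hc
    omega

lemma covRel_of_le (hm : Q.m = 0) {x y : ℝ} (h : x ≤ y) : Q.covRel x y := by
  unfold covRel; rw [if_pos hm]; exact h

lemma covRel_of_even {t : ℤ} (hm : Q.m ≠ 0) (ht : Even t) {x y : ℝ}
    (hx : x ∈ Set.Icc (Q.α t) (Q.α (t+1))) (hy : y ∈ Set.Icc (Q.α t) (Q.α (t+1)))
    (hyx : y ≤ x) : Q.covRel x y := by
  unfold covRel; rw [if_neg hm]; exact ⟨t, hx, hy, Or.inl ⟨ht, hyx⟩⟩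

lemma covRel_of_odd {t : ℤ} (hm : Q.m ≠ 0) (ht : ¬ Even t) {x y : ℝ}
    (hx : x ∈ Set.Icc (Q.α t) (Q.α (t+1))) (hy : y ∈ Set.Icc (Q.α t) (Q.α (t+1)))
    (hxy : x ≤ y) : Q.covRel x y := by
  unfold covRel; rw [if_neg hm]; exact ⟨t, hx, hy, Or.inr ⟨ht, hxy⟩⟩

end AtR

namespace BarAux

open scoped Classical

/-- `β` is congruent to `θ` modulo `2π`. -/
def Rel (θ β : ℝ) : Prop := ∃ n : ℤ, β = θ + 2 * Real.pi * n

attribute [reducible] Rel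

attribute [reducible] barIdx

lemma Rel.refl (θ : ℝ) : Rel θ θ := ⟨0, by push_cast; ring⟩

lemma Rel.arith {θ β : ℝ} (h : Rel θ β) {θ' β' : ℝ} (e : β' - θ' = β - θ) : Rel θ' β' := by
  obtain ⟨n, hn⟩ := h
  exact ⟨n, by rw [hn] at e; linarith⟩

lemma Rel.between {θ a b : ℝ} (ha : Rel θ a) (hb : Rel θ b) : Rel b a := by
  obtain ⟨n, hn⟩ := ha
  obtain ⟨m, hm⟩ := hb
  exact ⟨n - m, by rw [hn, hm]; push_cast; ring⟩

lemma Rel.trans {a b c : ℝ} (h1 : Rel a b) (h2 : Rel b c) : Rel a c := by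
  obtain ⟨n, hn⟩ := h1
  obtain ⟨m, hm⟩ := h2
  exact ⟨n + m, by rw [hm, hn]; push_cast; ring⟩

lemma Rel.shift_base {θ β : ℝ} (h : Rel (θ + 2 * Real.pi) β) : Rel θ β := by
  obtain ⟨n, hn⟩ := h
  exact ⟨n + 1, by rw [hn]; push_cast; ring⟩

lemma Rel.unshift_base {θ β : ℝ} (h : Rel θ β) : Rel (θ + 2 * Real.pi) β := by
  obtain ⟨n, hn⟩ := h
  exact ⟨n - 1, by rw [hn]; push_cast; ring⟩

variable {k : Type} [Field k] {I : Set ℝ}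

/-- Naturality of a family of endomorphisms with respect to the bar structure maps. -/
def Nat1 (Q : AtR) (g : ∀ θ : ℝ, (barIdx I θ →₀ k) →ₗ[k] (barIdx I θ →₀ k)) : Prop :=
  ∀ ⦃x y : ℝ⦄, Q.covRel x y → ∀ v : barIdx I x →₀ k,
    g y (barMapHom k I x y v) = barMapHom k I x y (g x v)

/-- Naturality with respect to the periodicity identification. -/
def Nat2 (g : ∀ θ : ℝ, (barIdx I θ →₀ k) →ₗ[k] (barIdx I θ →₀ k)) : Prop :=
  ∀ (θ : ℝ) (v : barIdx I (θ + 2 * Real.pi) →₀ k),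
    g θ (Finsupp.equivMapDomain (barShift I θ) v) =
      Finsupp.equivMapDomain (barShift I θ) (g (θ + 2 * Real.pi) v)

/-- The coefficient of the family `g` at base point `θ`, row `r`, column `c`. -/
noncomputable def coefR (g : ∀ θ : ℝ, (barIdx I θ →₀ k) →ₗ[k] (barIdx I θ →₀ k))
    (θ r c : ℝ) : k :=
  if h : (r ∈ I ∧ Rel θ r) ∧ (c ∈ I ∧ Rel θ c) then
    g θ (Finsupp.single ⟨c, h.2.1, h.2.2⟩ 1) ⟨r, h.1.1, h.1.2⟩ else 0

/-- The matrix entry at row `r`, column `c`. -/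
noncomputable def ent (g : ∀ θ : ℝ, (barIdx I θ →₀ k) →ₗ[k] (barIdx I θ →₀ k))
    (r c : ℝ) : k := coefR g c r c

variable {g : ∀ θ : ℝ, (barIdx I θ →₀ k) →ₗ[k] (barIdx I θ →₀ k)}

lemma coefR_eq (θ r c : ℝ) (hr : r ∈ I) (hc : c ∈ I) (hrθ : Rel θ r) (hcθ : Rel θ c) :
    coefR g θ r c = g θ (Finsupp.single ⟨c, hc, hcθ⟩ 1) ⟨r, hr, hrθ⟩ := by
  unfold coefR
  rw [dif_pos ⟨⟨hr, hrθ⟩, ⟨hc, hcθ⟩⟩]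

lemma coefR_shift (h2 : Nat2 g) (θ r c : ℝ) (hr : r ∈ I) (hc : c ∈ I)
    (hrθ : Rel (θ + 2 * Real.pi) r) (hcθ : Rel (θ + 2 * Real.pi) c) :
    coefR g θ r c = coefR g (θ + 2 * Real.pi) r c := by
  rw [coefR_eq θ r c hr hc hrθ.shift_base hcθ.shift_base,
    coefR_eq (θ + 2 * Real.pi) r c hr hc hrθ hcθ]
  have h := h2 θ (Finsupp.single ⟨c, hc, hcθ⟩ 1)
  rw [Finsupp.equivMapDomain_single] at h
  have e1 : (barShift I θ) ⟨c, hc, hcθ⟩ = ⟨c, hc, hcθ.shift_base⟩ := Subtype.ext rfl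
  rw [e1] at h
  rw [h, Finsupp.equivMapDomain_apply]
  congr 1

lemma coefR_base (h2 : Nat2 g) (r c : ℝ) (hr : r ∈ I) (hc : c ∈ I)
    (hrc : Rel c r) : ∀ (n : ℤ) (θ : ℝ), c = θ + 2 * Real.pi * n →
    coefR g θ r c = ent g r c := by
  intro n
  induction n using Int.induction_on with
  | zero =>
      intro θ hθ
      have : θ = c := by push_cast at hθ; linarith
      subst this
      rfl
  | succ n ih =>
      intro θ hθ
      have h1 : coefR g θ r c = coefR g (θ + 2 * Real.pi) r c := by
        refine coefR_shift h2 θ r c hr hc ?_ ?_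
        · refine Rel.trans ?_ hrc
          exact ⟨n, by push_cast at hθ ⊢; linarith⟩
        · exact ⟨n, by push_cast at hθ ⊢; linarith⟩
      rw [h1]
      exact ih (θ + 2 * Real.pi) (by push_cast at hθ ⊢; linarith)
  | pred n ih =>
      intro θ hθ
      have h1 : coefR g (θ - 2 * Real.pi) r c = coefR g θ r c := by
        have e : θ - 2 * Real.pi + 2 * Real.pi = θ := by ring
        have h := coefR_shift h2 (θ - 2 * Real.pi) r c hr hc
          (by rw [e]; exact Rel.trans ⟨-n - 1, by push_cast at hθ ⊢; linarith⟩ hrc)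
          (by rw [e]; exact ⟨-n - 1, by push_cast at hθ ⊢; linarith⟩)
        rwa [e] at h
      rw [← h1]
      exact ih (θ - 2 * Real.pi) (by push_cast at hθ ⊢; linarith)

lemma eval_eq_ent (h2 : Nat2 g) (θ r c : ℝ) (hr : r ∈ I) (hc : c ∈ I)
    (hrθ : Rel θ r) (hcθ : Rel θ c) :
    g θ (Finsupp.single ⟨c, hc, hcθ⟩ 1) ⟨r, hr, hrθ⟩ = ent g r c := by
  rw [← coefR_eq θ r c hr hc hrθ hcθ]
  obtain ⟨n, hn⟩ := id hcθ
  exact coefR_base h2 r c hr hc (hrθ.between hcθ) n θ hn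

end BarAux

namespace BarAux

open scoped Classical

variable {k : Type} [Field k] {I : Set ℝ}
variable {g : ∀ θ : ℝ, (barIdx I θ →₀ k) →ₗ[k] (barIdx I θ →₀ k)}

lemma barMapHom_single' (x y c : ℝ) (hc : c ∈ I) (hcx : Rel x c) (a : k) :
    barMapHom k I x y (Finsupp.single ⟨c, hc, hcx⟩ a) =
      if h : c - x + y ∈ I then
        Finsupp.single (⟨c - x + y, h, hcx.arith (by ring)⟩ : barIdx I y) a else 0 := by
  unfold barMapHom
  rw [Finsupp.linearCombination_single]
  split_ifs with h
  · rw [Finsupp.smul_single', mul_one]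
  · rw [smul_zero]

lemma barMapHom_apply (x y ρ : ℝ) (hρ : ρ ∈ I) (hρy : Rel y ρ) (w : barIdx I x →₀ k) :
    barMapHom k I x y w ⟨ρ, hρ, hρy⟩ =
      if h : ρ - y + x ∈ I then w ⟨ρ - y + x, h, hρy.arith (by ring)⟩ else 0 := by
  induction w using Finsupp.induction_linear with
  | zero =>
      rw [map_zero, Finsupp.zero_apply]
      split_ifs <;> simp
  | add f f' hf hf' =>
      rw [map_add, Finsupp.add_apply, hf, hf']
      split_ifs <;> simp
  | single b a =>
      obtain ⟨c, hc, hcx⟩ := b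
      rw [barMapHom_single' x y c hc hcx a]
      by_cases h1 : c - x + y ∈ I
      · rw [dif_pos h1]
        by_cases h2 : ρ - y + x ∈ I
        · rw [dif_pos h2]
          rw [Finsupp.single_apply, Finsupp.single_apply]
          by_cases h3 : c - x + y = ρ
          · rw [if_pos (Subtype.ext h3), if_pos (Subtype.ext (by dsimp only; linarith))]
          · rw [if_neg fun hcon => h3 (congrArg Subtype.val hcon),
              if_neg fun hcon => h3 (by have := congrArg Subtype.val hcon; dsimp only at this; linarith)]
        · rw [dif_neg h2]
          rw [Finsupp.single_apply, if_neg]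
          intro hcon
          have h4 := congrArg Subtype.val hcon
          dsimp only at h4
          exact h2 (by rw [show ρ - y + x = c by linarith]; exact hc)
      · rw [dif_neg h1, Finsupp.zero_apply]
        split_ifs with h2
        · rw [Finsupp.single_apply, if_neg]
          intro hcon
          have h4 := congrArg Subtype.val hcon
          dsimp only at h4
          exact h1 (by rw [show c - x + y = ρ by linarith]; exact hρ)
        · rfl


lemma barMapHom_single_pos (x y c : ℝ) (hc : c ∈ I) (hcx : Rel x c) (a : k)
    (h : c - x + y ∈ I) :
    barMapHom k I x y (Finsupp.single ⟨c, hc, hcx⟩ a) =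
      Finsupp.single (⟨c - x + y, h, hcx.arith (by ring)⟩ : barIdx I y) a := by
  rw [barMapHom_single' x y c hc hcx a]
  exact dif_pos h

lemma barMapHom_single_neg (x y c : ℝ) (hc : c ∈ I) (hcx : Rel x c) (a : k)
    (h : c - x + y ∉ I) :
    barMapHom k I x y (Finsupp.single ⟨c, hc, hcx⟩ a) = 0 := by
  rw [barMapHom_single' x y c hc hcx a]
  exact dif_neg h

lemma barMapHom_apply_pos (x y ρ : ℝ) (hρ : ρ ∈ I) (hρy : Rel y ρ) (w : barIdx I x →₀ k)
    (h : ρ - y + x ∈ I) :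
    barMapHom k I x y w ⟨ρ, hρ, hρy⟩ = w ⟨ρ - y + x, h, hρy.arith (by ring)⟩ := by
  rw [barMapHom_apply x y ρ hρ hρy w]
  exact dif_pos h

lemma barMapHom_apply_neg (x y ρ : ℝ) (hρ : ρ ∈ I) (hρy : Rel y ρ) (w : barIdx I x →₀ k)
    (h : ρ - y + x ∉ I) :
    barMapHom k I x y w ⟨ρ, hρ, hρy⟩ = 0 := by
  rw [barMapHom_apply x y ρ hρ hρy w]
  exact dif_neg h

lemma rel_a {Q : AtR} (h1 : Nat1 Q g) (h2 : Nat2 g) {x y : ℝ} (hxy : Q.covRel x y)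
    {c : ℝ} (hc : c ∈ I) (hcx : Rel x c) (hcd : c - x + y ∈ I)
    {r : ℝ} (hr : r ∈ I) (hrel : Rel (c - x + y) r) :
    ent g r (c - x + y) = if r - y + x ∈ I then ent g (r - y + x) c else 0 := by
  have hcy : Rel y (c - x + y) := hcx.arith (by ring)
  have hry : Rel y r := hcy.trans hrel
  have hnat := h1 hxy (Finsupp.single ⟨c, hc, hcx⟩ 1)
  rw [barMapHom_single_pos x y c hc hcx 1 hcd] at hnat
  have hev := congrArg (fun w : barIdx I y →₀ k => w ⟨r, hr, hry⟩) hnat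
  rw [eval_eq_ent h2 y r (c - x + y) hr hcd hry (hcx.arith (by ring))] at hev
  split_ifs with h'
  · rw [barMapHom_apply_pos x y r hr hry _ h'] at hev
    rw [hev]
    exact eval_eq_ent h2 x (r - y + x) c h' hc (hry.arith (by ring)) hcx
  · rw [barMapHom_apply_neg x y r hr hry _ h'] at hev
    exact hev

lemma rel_b {Q : AtR} (h1 : Nat1 Q g) (h2 : Nat2 g) {x y : ℝ} (hxy : Q.covRel x y)
    {c : ℝ} (hc : c ∈ I) (hcx : Rel x c) (hcd : c - x + y ∉ I)
    {r : ℝ} (hr : r ∈ I) (hrc : Rel c r) (hrd : r - x + y ∈ I) :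
    ent g r c = 0 := by
  have hnat := h1 hxy (Finsupp.single ⟨c, hc, hcx⟩ 1)
  rw [barMapHom_single_neg x y c hc hcx 1 hcd, map_zero] at hnat
  have hrx : Rel x r := hcx.trans hrc
  have hWy : Rel y (r - x + y) := hrx.arith (by ring)
  have hev := congrArg (fun w : barIdx I y →₀ k => w ⟨r - x + y, hrd, hWy⟩) hnat
  have hr' : r - x + y - y + x ∈ I := by rw [show r - x + y - y + x = r by ring]; exact hr
  rw [barMapHom_apply_pos x y (r - x + y) hrd hWy _ hr'] at hev
  have e : (⟨r - x + y - y + x, hr', hWy.arith (by ring)⟩ : barIdx I x) = ⟨r, hr, hrx⟩ :=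
    Subtype.ext (by ring)
  rw [e] at hev
  rw [eval_eq_ent h2 x r c hr hc hrx hcx] at hev
  exact hev.symm

end BarAux

namespace BarAux

open scoped Classical

variable {k : Type} [Field k] {I : Set ℝ}
variable {g : ∀ θ : ℝ, (barIdx I θ →₀ k) →ₗ[k] (barIdx I θ →₀ k)}

lemma Rel.of_zero_diff {a b : ℝ} (h : Rel 0 (b - a)) : Rel a b := h.arith (by ring)

/-- One sliding step within a single arc (or an arbitrary up-move when `m = 0`). -/
lemma ent_step {Q : AtR} (h1 : Nat1 Q g) (h2 : Nat2 g)
    {u v : ℝ} (huv : u ≤ v)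
    (hcov : Q.covRel u v ∨ Q.covRel v u)
    (s : ℝ) (hs : Rel 0 s)
    (hui : u ∈ I) (hvi : v ∈ I) (hus : u + s ∈ I) (hvs : v + s ∈ I) :
    ent g (u + s) u = ent g (v + s) v := by
  rcases hcov with hcov | hcov
  · -- move u → v, column u, row v + s
    have hrel : Rel (u - u + v) (v + s) := hs.arith (by ring)
    have hcd : u - u + v ∈ I := by rw [show u - u + v = v by ring]; exact hvi
    have h := rel_a h1 h2 hcov hui (Rel.refl u) hcd hvs hrel
    rw [show u - u + v = v by ring] at h
    have hmem : v + s - v + u ∈ I := by rw [show v + s - v + u = u + s by ring]; exact hus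
    rw [if_pos hmem] at h
    rw [show v + s - v + u = u + s by ring] at h
    exact h.symm
  · -- move v → u, column v, row u + s
    have hrel : Rel (v - v + u) (u + s) := hs.arith (by ring)
    have hcd : v - v + u ∈ I := by rw [show v - v + u = u by ring]; exact hui
    have h := rel_a h1 h2 hcov hvi (Rel.refl v) hcd hus hrel
    rw [show v - v + u = u by ring] at h
    have hmem : u + s - u + v ∈ I := by rw [show u + s - u + v = v + s by ring]; exact hvs
    rw [if_pos hmem] at h
    rw [show u + s - u + v = v + s by ring] at h
    exact h

/-- Walking across at most `K + 1` arcs. -/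
lemma ent_walk {Q : AtR} (h1 : Nat1 Q g) (h2 : Nat2 g) (hm : Q.m ≠ 0)
    (hI : I.OrdConnected) (s : ℝ) (hs : Rel 0 s) :
    ∀ (K : ℕ) (t : ℤ) (c c' : ℝ), Q.α t ≤ c → c ≤ Q.α (t + 1) → c ≤ c' →
      c' ≤ Q.α (t + 1 + (K : ℤ)) →
      c ∈ I → c' ∈ I → c + s ∈ I → c' + s ∈ I →
      ent g (c + s) c = ent g (c' + s) c' := by
  intro K
  induction K with
  | zero =>
      intro t c c' ht1 ht2 hcc' ht3 hci hc'i hcsi hc'si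
      rw [show t + 1 + ((0:ℕ):ℤ) = t + 1 by push_cast; ring] at ht3
      have hcov : Q.covRel c c' ∨ Q.covRel c' c := by
        rcases Int.even_or_odd t with he | ho
        · exact Or.inr (AtR.covRel_of_even hm he ⟨le_trans ht1 hcc', ht3⟩ ⟨ht1, ht2⟩ hcc')
        · exact Or.inl (AtR.covRel_of_odd hm (Int.not_even_iff_odd.mpr ho) ⟨ht1, ht2⟩
            ⟨le_trans ht1 hcc', ht3⟩ hcc')
      exact ent_step h1 h2 hcc' hcov s hs hci hc'i hcsi hc'si
  | succ K ih =>
      intro t c c' ht1 ht2 hcc' ht3 hci hc'i hcsi hc'si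
      by_cases hmid : c' ≤ Q.α (t + 1)
      · have hcov : Q.covRel c c' ∨ Q.covRel c' c := by
          rcases Int.even_or_odd t with he | ho
          · exact Or.inr (AtR.covRel_of_even hm he ⟨le_trans ht1 hcc', hmid⟩ ⟨ht1, ht2⟩ hcc')
          · exact Or.inl (AtR.covRel_of_odd hm (Int.not_even_iff_odd.mpr ho) ⟨ht1, ht2⟩
              ⟨le_trans ht1 hcc', hmid⟩ hcc')
        exact ent_step h1 h2 hcc' hcov s hs hci hc'i hcsi hc'si
      · push_neg at hmid
        set w := Q.α (t + 1) with hw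
        have hwc' : w ≤ c' := hmid.le
        have hwi : w ∈ I := hI.out hci hc'i ⟨ht2, hwc'⟩
        have hwsi : w + s ∈ I := hI.out hcsi hc'si ⟨by linarith, by linarith⟩
        have step1 : ent g (c + s) c = ent g (w + s) w := by
          have hcov : Q.covRel c w ∨ Q.covRel w c := by
            rcases Int.even_or_odd t with he | ho
            · exact Or.inr (AtR.covRel_of_even hm he ⟨le_trans ht1 ht2, le_rfl⟩ ⟨ht1, ht2⟩ ht2)
            · exact Or.inl (AtR.covRel_of_odd hm (Int.not_even_iff_odd.mpr ho) ⟨ht1, ht2⟩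
                ⟨le_trans ht1 ht2, le_rfl⟩ ht2)
          exact ent_step h1 h2 ht2 hcov s hs hci hwi hcsi hwsi
        have step2 : ent g (w + s) w = ent g (c' + s) c' := by
          refine ih (t + 1) w c' le_rfl (Q.mono.monotone (by omega)) hwc' ?_ hwi hc'i hwsi hc'si
          rw [show t + 1 + 1 + ((K:ℕ):ℤ) = t + 1 + ((K+1:ℕ):ℤ) by push_cast; ring]
          exact ht3
        rw [step1, step2]

/-- Constancy of the entries along a fixed shift `s`. -/
lemma ent_const {Q : AtR} (h1 : Nat1 Q g) (h2 : Nat2 g) (hI : I.OrdConnected)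
    (s c c' : ℝ) (hs : Rel 0 s) (hc : c ∈ I) (hc' : c' ∈ I)
    (hcs : c + s ∈ I) (hc's : c' + s ∈ I) :
    ent g (c + s) c = ent g (c' + s) c' := by
  have main : ∀ a b : ℝ, a ≤ b → a ∈ I → b ∈ I → a + s ∈ I → b + s ∈ I →
      ent g (a + s) a = ent g (b + s) b := by
    intro a b hab hai hbi hasi hbsi
    by_cases hm : Q.m = 0
    · exact ent_step h1 h2 hab (Or.inl (AtR.covRel_of_le hm hab)) s hs hai hbi hasi hbsi
    · obtain ⟨t, ht1, ht2⟩ := AtR.exists_arc Q a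
      obtain ⟨j, hj1, hj2⟩ := AtR.exists_arc Q b
      have htj : t ≤ j := by
        by_contra hcon
        push_neg at hcon
        have : Q.α (j + 1) ≤ Q.α t := Q.mono.monotone (by omega)
        linarith
      refine ent_walk h1 h2 hm hI s hs (j - t).toNat t a b ht1 ht2.le hab ?_ hai hbi hasi hbsi
      have : t + 1 + ((j - t).toNat : ℤ) = j + 1 := by omega
      rw [this]
      exact hj2.le
  rcases le_total c c' with h | h
  · exact main c c' h hc hc' hcs hc's
  · exact (main c' c h hc' hc hc's hcs).symm

end BarAux

namespace BarAux

open scoped Classical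

variable {k : Type} [Field k] {I : Set ℝ}
variable {g : ∀ θ : ℝ, (barIdx I θ →₀ k) →ₗ[k] (barIdx I θ →₀ k)}

lemma gap_ge {r c : ℝ} (hrc : Rel c r) (hlt : r < c) : 2 * Real.pi ≤ c - r := by
  obtain ⟨n, hn⟩ := hrc
  have hπ := Real.pi_pos
  have hn0 : (n : ℝ) < 0 := by nlinarith
  have hnz : n < 0 := by exact_mod_cast hn0
  have hn1 : n ≤ -1 := by omega
  have : (n : ℝ) ≤ -1 := by exact_mod_cast hn1
  nlinarith

lemma dead_below_m0 {Q : AtR} (h1 : Nat1 Q g) (h2 : Nat2 g) (hm : Q.m = 0)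
    (hbd : BddBelow I) :
    ∀ r c : ℝ, r ∈ I → c ∈ I → Rel c r → r < c → ent g r c = 0 := by
  obtain ⟨b, hb⟩ := hbd
  have main : ∀ (K : ℕ) (r c : ℝ), r ∈ I → c ∈ I → Rel c r → r < c →
      r - b < K * (c - r) → ent g r c = 0 := by
    intro K
    induction K with
    | zero =>
        intro r c hr hc hrc hlt hK
        exact absurd (hb hr) (by push_cast at hK; linarith)
    | succ K ih =>
        intro r c hr hc hrc hlt hK
        have hcov : Q.covRel r c := AtR.covRel_of_le hm hlt.le
        have hcd : r - r + c ∈ I := by rw [show r - r + c = c by ring]; exact hc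
        have hrel : Rel (r - r + c) r := hrc.arith (by ring)
        have h := rel_a h1 h2 hcov hr (Rel.refl r) hcd hr hrel
        rw [show r - r + c = c by ring] at h
        by_cases hmem : r - c + r ∈ I
        · rw [if_pos hmem] at h
          rw [h]
          refine ih (r - c + r) r hmem hr (hrc.arith (by ring)) (by linarith) ?_
          push_cast at hK ⊢
          nlinarith
        · rw [if_neg hmem] at h
          exact h
  intro r c hr hc hrc hlt
  obtain ⟨K, hK⟩ := exists_nat_gt ((r - b) / (c - r))
  refine main K r c hr hc hrc hlt ?_
  rw [div_lt_iff₀ (by linarith)] at hK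
  linarith

lemma kill_below {Q : AtR} (h1 : Nat1 Q g) (h2 : Nat2 g) (hm : Q.m ≠ 0)
    (hI : I.OrdConnected)
    {x y : ℝ} (hxy : Q.covRel x y) (hx : x ∉ I) (hy : y ∈ I) (hxyl : x < y)
    {r c : ℝ} (hr : r ∈ I) (hc : c ∈ I) (hrc : Rel c r) (hlt : r < c) (hyr : y ≤ r) :
    ent g r c = 0 := by
  have h2pi : 2 * Real.pi ≤ c - r := gap_ge hrc hlt
  obtain ⟨n, hn⟩ := hrc
  have hs : Rel 0 (c - r) := ⟨-n, by rw [hn]; push_cast; ring⟩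
  have hs' : Rel 0 (r - c) := ⟨n, by rw [hn]; push_cast; ring⟩
  have hdiff := Q.covRel_diff_lt hm hxy
  have hyc : y + (c - r) ∈ I := hI.out hy hc ⟨by linarith, by linarith⟩
  have hconst := ent_const h1 h2 hI (r - c) c (y + (c - r)) hs' hc hyc
    (by rw [show c + (r - c) = r by ring]; exact hr)
    (by rw [show y + (c - r) + (r - c) = y by ring]; exact hy)
  rw [show c + (r - c) = r by ring, show y + (c - r) + (r - c) = y by ring] at hconst
  have hmove : Q.covRel (x + (c - r)) (y + (c - r)) := by
    obtain ⟨n₀, hn₀⟩ := hs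
    have hcv := AtR.covRel_shift_int hxy n₀
    rw [show x + 2 * Real.pi * (n₀:ℝ) = x + (c - r) by rw [hn₀]; ring,
      show y + 2 * Real.pi * (n₀:ℝ) = y + (c - r) by rw [hn₀]; ring] at hcv
    exact hcv
  have hcol : x + (c - r) ∈ I := hI.out hy hyc ⟨by linarith, by linarith⟩
  have hcd : x + (c - r) - (x + (c - r)) + (y + (c - r)) ∈ I := by
    rw [show x + (c - r) - (x + (c - r)) + (y + (c - r)) = y + (c - r) by ring]
    exact hyc
  have hrel : Rel (x + (c - r) - (x + (c - r)) + (y + (c - r))) y := hs'.arith (by ring)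
  have hkill := rel_a h1 h2 hmove hcol (Rel.refl _) hcd hy hrel
  rw [show x + (c - r) - (x + (c - r)) + (y + (c - r)) = y + (c - r) by ring] at hkill
  have hnot : y - (y + (c - r)) + (x + (c - r)) ∉ I := by
    rw [show y - (y + (c - r)) + (x + (c - r)) = x by ring]
    exact hx
  rw [if_neg hnot] at hkill
  rw [hconst, hkill]

lemma kill_above {Q : AtR} (h1 : Nat1 Q g) (h2 : Nat2 g) (hm : Q.m ≠ 0)
    (hI : I.OrdConnected)
    {x y : ℝ} (hxy : Q.covRel x y) (hx : x ∈ I) (hy : y ∉ I) (hyx : y < x)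
    {r c : ℝ} (hr : r ∈ I) (hc : c ∈ I) (hrc : Rel c r) (hlt : c < r) (hxc : x ≤ c) :
    ent g r c = 0 := by
  have hrc' : Rel r c := by
    obtain ⟨n', hn'⟩ := hrc
    exact ⟨-n', by rw [hn']; push_cast; ring⟩
  have h2pi : 2 * Real.pi ≤ r - c := gap_ge hrc' hlt
  obtain ⟨n, hn⟩ := hrc
  have hs : Rel 0 (r - c) := ⟨n, by rw [hn]; push_cast; ring⟩
  have hdiff := Q.covRel_diff_lt hm hxy
  have hxs : x + (r - c) ∈ I := hI.out hx hr ⟨by linarith, by linarith⟩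
  have hconst := ent_const h1 h2 hI (r - c) c x hs hc hx
    (by rw [show c + (r - c) = r by ring]; exact hr) hxs
  rw [show c + (r - c) = r by ring] at hconst
  have hcd : x - x + y ∉ I := by rw [show x - x + y = y by ring]; exact hy
  have hrd : x + (r - c) - x + y ∈ I := by
    rw [show x + (r - c) - x + y = y + (r - c) by ring]
    exact hI.out hx hxs ⟨by linarith, by linarith⟩
  have hkill := rel_b h1 h2 hxy hx (Rel.refl x) hcd hxs (hs.arith (by ring)) hrd
  rw [hconst, hkill]

lemma bottom_dichotomy (Q : AtR) (hm : Q.m ≠ 0) (hne : I.Nonempty)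
    (hbdd : BddBelow I) (hI : I.OrdConnected) :
    (∀ ρ ∈ I, ∃ x y : ℝ, Q.covRel x y ∧ x < y ∧ x ∉ I ∧ y ∈ I ∧ y ≤ ρ) ∨
    (∀ ρ ∈ I, ∃ x y : ℝ, Q.covRel x y ∧ y < x ∧ y ∉ I ∧ x ∈ I ∧ x ≤ ρ) := by
  set i := sInf I with hi
  have hlb : ∀ z ∈ I, i ≤ z := fun z hz => csInf_le hbdd hz
  have hnotmem : ∀ z : ℝ, z < i → z ∉ I := fun z hz hmem => absurd (hlb z hmem) (not_le.mpr hz)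
  obtain ⟨t, ht1, ht2⟩ := AtR.exists_arc Q i
  by_cases hiI : i ∈ I
  · rcases eq_or_lt_of_le ht1 with heq | hlt
    · -- i = α t : use the arc below, [α (t-1), α t]
      have harc : Q.α (t - 1 + 1) = i := by rw [show t - 1 + 1 = t by ring]; exact heq
      have hlow : Q.α (t - 1) < i := by
        rw [← harc]; exact Q.mono (by omega)
      rcases Int.even_or_odd (t - 1) with he | ho
      · -- even arc below: down-move from i
        refine Or.inr (fun ρ hρ => ⟨i, Q.α (t - 1), ?_, hlow, hnotmem _ hlow, hiI, hlb ρ hρ⟩)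
        exact AtR.covRel_of_even hm he ⟨hlow.le, harc.ge⟩ ⟨le_rfl, (Q.mono (by omega)).le⟩ hlow.le
      · -- odd arc below: up-move into i
        refine Or.inl (fun ρ hρ => ⟨Q.α (t - 1), i, ?_, hlow, hnotmem _ hlow, hiI, hlb ρ hρ⟩)
        exact AtR.covRel_of_odd hm (Int.not_even_iff_odd.mpr ho) ⟨le_rfl, (Q.mono (by omega)).le⟩
          ⟨hlow.le, harc.ge⟩ hlow.le
    · -- α t < i : i interior-ish of arc t
      rcases Int.even_or_odd t with he | ho
      · refine Or.inr (fun ρ hρ => ⟨i, Q.α t, ?_, hlt, hnotmem _ hlt, hiI, hlb ρ hρ⟩)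
        exact AtR.covRel_of_even hm he ⟨hlt.le, ht2.le⟩ ⟨le_rfl, (Q.mono (by omega)).le⟩ hlt.le
      · refine Or.inl (fun ρ hρ => ⟨Q.α t, i, ?_, hlt, hnotmem _ hlt, hiI, hlb ρ hρ⟩)
        exact AtR.covRel_of_odd hm (Int.not_even_iff_odd.mpr ho) ⟨le_rfl, (Q.mono (by omega)).le⟩
          ⟨hlt.le, ht2.le⟩ hlt.le
  · -- i ∉ I
    have hstrict : ∀ ρ ∈ I, i < ρ := by
      intro ρ hρ
      rcases eq_or_lt_of_le (hlb ρ hρ) with h | h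
      · exact absurd (h ▸ hρ) hiI
      · exact h
    have hyI : ∀ ρ ∈ I, min (Q.α (t + 1)) ρ ∈ I := by
      intro ρ hρ
      have hgt : i < min (Q.α (t + 1)) ρ := lt_min ht2 (hstrict ρ hρ)
      obtain ⟨z, hzI, hz⟩ : ∃ z ∈ I, z < min (Q.α (t + 1)) ρ := by
        by_contra hcon
        push_neg at hcon
        exact absurd (le_csInf hne hcon) (not_le.mpr hgt)
      exact hI.out hzI hρ ⟨hz.le, min_le_right _ _⟩
    rcases Int.even_or_odd t with he | ho
    · refine Or.inr (fun ρ hρ => ⟨min (Q.α (t + 1)) ρ, i, ?_, lt_min ht2 (hstrict ρ hρ),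
        hiI, hyI ρ hρ, min_le_right _ _⟩)
      exact AtR.covRel_of_even hm he
        ⟨le_trans ht1 (lt_min ht2 (hstrict ρ hρ)).le, min_le_left _ _⟩
        ⟨ht1, ht2.le⟩ (lt_min ht2 (hstrict ρ hρ)).le
    · refine Or.inl (fun ρ hρ => ⟨i, min (Q.α (t + 1)) ρ, ?_, lt_min ht2 (hstrict ρ hρ),
        hiI, hyI ρ hρ, min_le_right _ _⟩)
      exact AtR.covRel_of_odd hm (Int.not_even_iff_odd.mpr ho) ⟨ht1, ht2.le⟩
        ⟨le_trans ht1 (lt_min ht2 (hstrict ρ hρ)).le, min_le_left _ _⟩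
        (lt_min ht2 (hstrict ρ hρ)).le

end BarAux

namespace BarAux

open scoped Classical

variable {k : Type} [Field k] {I : Set ℝ}
variable {g : ∀ θ : ℝ, (barIdx I θ →₀ k) →ₗ[k] (barIdx I θ →₀ k)}

lemma g_apply_sum (h2 : Nat2 g) (θ : ℝ) (w : barIdx I θ →₀ k) (b : barIdx I θ) :
    g θ w b = w.sum (fun β a => a * ent g b.1 β.1) := by
  conv_lhs => rw [← Finsupp.sum_single w, map_finsuppSum]
  rw [Finsupp.sum_apply]
  refine Finsupp.sum_congr ?_
  intro β hβ
  have hsingle : Finsupp.single β (w β) = (w β) • Finsupp.single β (1:k) := by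
    rw [Finsupp.smul_single', mul_one]
  rw [hsingle, map_smul, Finsupp.smul_apply, smul_eq_mul]
  congr 1
  exact eval_eq_ent h2 θ b.1 β.1 b.2.1 β.2.1 b.2.2 β.2.2

lemma diag_sq {Q : AtR} (h1 : Nat1 Q g) (h2 : Nat2 g)
    (hidem : ∀ θ v, g θ (g θ v) = g θ v)
    (c₀ : ℝ) (hc₀ : c₀ ∈ I)
    (hkill : ∀ β : ℝ, β ∈ I → Rel c₀ β → β ≠ c₀ → ent g c₀ β * ent g β c₀ = 0) :
    ent g c₀ c₀ * ent g c₀ c₀ = ent g c₀ c₀ := by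
  set b₀ : barIdx I c₀ := ⟨c₀, hc₀, Rel.refl c₀⟩ with hb₀def
  set w : barIdx I c₀ →₀ k := g c₀ (Finsupp.single b₀ 1) with hwdef
  have hwb : ∀ β : barIdx I c₀, w β = ent g β.1 c₀ := fun β =>
    eval_eq_ent h2 c₀ β.1 c₀ β.2.1 hc₀ β.2.2 (Rel.refl c₀)
  have hid : g c₀ w = w := hidem c₀ (Finsupp.single b₀ 1)
  have hev := congrArg (fun v : barIdx I c₀ →₀ k => v b₀) hid
  rw [g_apply_sum h2 c₀ w b₀] at hev
  have h0 : ∀ β : barIdx I c₀, w β ≠ 0 → β ≠ b₀ → w β * ent g b₀.1 β.1 = 0 := by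
    intro β hβne hne
    rw [hwb β]
    have hβc : β.1 ≠ c₀ := fun hcon => hne (Subtype.ext hcon)
    rw [mul_comm]
    exact hkill β.1 β.2.1 β.2.2 hβc
  have h1' : w b₀ = 0 → w b₀ * ent g b₀.1 b₀.1 = 0 := fun h => by rw [h, zero_mul]
  have hsum := Finsupp.sum_eq_single (f := w) (g := fun β a => a * ent g b₀.1 β.1) b₀
    h0 (fun _ => zero_mul _)
  rw [hsum] at hev
  rw [hwb b₀] at hev
  exact hev

lemma equivMapDomain_sub {α β M : Type*} [AddGroup M] (f : α ≃ β) (a b : α →₀ M) :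
    Finsupp.equivMapDomain f (a - b) =
      Finsupp.equivMapDomain f a - Finsupp.equivMapDomain f b := by
  ext x
  simp [Finsupp.equivMapDomain_apply, Finsupp.sub_apply]

lemma nat1_sub {Q : AtR} (h1 : Nat1 Q g) : Nat1 Q (fun θ => LinearMap.id - g θ) := by
  intro x y h v
  simp only [LinearMap.sub_apply, LinearMap.id_coe, id_eq]
  rw [map_sub, h1 h v]

lemma nat2_sub (h2 : Nat2 g) : Nat2 (fun θ => LinearMap.id - g θ) := by
  intro θ v
  simp only [LinearMap.sub_apply, LinearMap.id_coe, id_eq]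
  rw [equivMapDomain_sub, h2 θ v]

lemma ent_sub (r c : ℝ) (hr : r ∈ I) (hc : c ∈ I) (hrc : Rel c r) :
    ent (fun θ => LinearMap.id - g θ) r c = (if r = c then 1 else 0) - ent g r c := by
  unfold ent
  rw [coefR_eq (g := fun θ => LinearMap.id - g θ) c r c hr hc hrc (Rel.refl c),
    coefR_eq (g := g) c r c hr hc hrc (Rel.refl c)]
  simp only [LinearMap.sub_apply, LinearMap.id_coe, id_eq, Finsupp.sub_apply]
  congr 1
  by_cases h : r = c
  · subst h
    rw [if_pos rfl]
    have e : (⟨r, hc, Rel.refl r⟩ : barIdx I r) = ⟨r, hr, hrc⟩ := Subtype.ext rfl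
    rw [e, Finsupp.single_eq_same]
  · rw [if_neg h, Finsupp.single_eq_of_ne]
    intro hcon
    exact h (congrArg Subtype.val hcon)

/-- The engine: dead side + zero diagonal + idempotent implies vanishing. -/
lemma engine {Q : AtR} (h1 : Nat1 Q g) (h2 : Nat2 g) (hI : I.OrdConnected)
    (hidem : ∀ θ v, g θ (g θ v) = g θ v)
    (hS : (∀ r c : ℝ, r ∈ I → c ∈ I → Rel c r → r < c → ent g r c = 0) ∨
          (∀ r c : ℝ, r ∈ I → c ∈ I → Rel c r → c < r → ent g r c = 0))
    (c₀ : ℝ) (hc₀ : c₀ ∈ I) (h0 : ent g c₀ c₀ = 0) : ∀ θ, g θ = 0 := by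
  have hdiag : ∀ c : ℝ, c ∈ I → ent g c c = 0 := by
    intro c hc
    have h := ent_const h1 h2 hI 0 c c₀ ⟨0, by push_cast; ring⟩ hc hc₀
      (by rwa [add_zero]) (by rwa [add_zero])
    rw [add_zero, add_zero] at h
    rw [h, h0]
  intro θ
  apply LinearMap.ext
  intro w
  rw [LinearMap.zero_apply]
  by_contra hne'
  have hu : g θ (g θ w) = g θ w := hidem θ w
  have hsupp : (g θ w).support.Nonempty := Finsupp.support_nonempty_iff.mpr hne'
  rcases hS with hS | hS
  · obtain ⟨b, hb, hmin⟩ := (g θ w).support.exists_min_image (fun β => β.1) hsupp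
    have hev := congrArg (fun v : barIdx I θ →₀ k => v b) hu
    rw [g_apply_sum h2 θ (g θ w) b] at hev
    have hzero : ((g θ w).sum fun β a => a * ent g b.1 β.1) = 0 := by
      rw [Finsupp.sum]
      apply Finset.sum_eq_zero
      intro β hβ
      rcases eq_or_lt_of_le (hmin β hβ) with heq | hlt
      · have hβb : β = b := Subtype.ext heq.symm
        rw [hβb, hdiag b.1 b.2.1, mul_zero]
      · rw [hS b.1 β.1 b.2.1 β.2.1 (Rel.between b.2.2 β.2.2) hlt, mul_zero]
    rw [hzero] at hev
    exact (Finsupp.mem_support_iff.mp hb) hev.symm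
  · obtain ⟨b, hb, hmax⟩ := (g θ w).support.exists_max_image (fun β => β.1) hsupp
    have hev := congrArg (fun v : barIdx I θ →₀ k => v b) hu
    rw [g_apply_sum h2 θ (g θ w) b] at hev
    have hzero : ((g θ w).sum fun β a => a * ent g b.1 β.1) = 0 := by
      rw [Finsupp.sum]
      apply Finset.sum_eq_zero
      intro β hβ
      rcases eq_or_lt_of_le (hmax β hβ) with heq | hlt
      · have hβb : β = b := Subtype.ext heq
        rw [hβb, hdiag b.1 b.2.1, mul_zero]
      · rw [hS b.1 β.1 b.2.1 β.2.1 (Rel.between b.2.2 β.2.2) hlt, mul_zero]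
    rw [hzero] at hev
    exact (Finsupp.mem_support_iff.mp hb) hev.symm

/-- Main result on the coordinate side: a natural idempotent family on a bar is
`0` or the identity. -/
theorem trivial_idem {Q : AtR} (hne : I.Nonempty) (hbd : Bornology.IsBounded I)
    (hI : I.OrdConnected) (h1 : Nat1 Q g) (h2 : Nat2 g)
    (hidem : ∀ θ v, g θ (g θ v) = g θ v) :
    (∀ θ, g θ = 0) ∨ (∀ θ, g θ = LinearMap.id) := by
  obtain ⟨c₀, hc₀⟩ := hne
  have hbdd : BddBelow I := hbd.bddBelow
  have hside : (∀ r c : ℝ, r ∈ I → c ∈ I → Rel c r → r < c → ent g r c = 0) ∨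
               (∀ r c : ℝ, r ∈ I → c ∈ I → Rel c r → c < r → ent g r c = 0) := by
    by_cases hm : Q.m = 0
    · exact Or.inl (dead_below_m0 h1 h2 hm hbdd)
    · rcases bottom_dichotomy Q hm ⟨c₀, hc₀⟩ hbdd hI with hA | hB
      · refine Or.inl (fun r c hr hc hrc hlt => ?_)
        obtain ⟨x, y, hxy, hxyl, hx, hy, hyr⟩ := hA r hr
        exact kill_below h1 h2 hm hI hxy hx hy hxyl hr hc hrc hlt hyr
      · refine Or.inr (fun r c hr hc hrc hlt => ?_)
        obtain ⟨x, y, hxy, hyx, hynot, hxmem, hxc⟩ := hB c hc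
        exact kill_above h1 h2 hm hI hxy hxmem hynot hyx hr hc hrc hlt hxc
  have hkill : ∀ β : ℝ, β ∈ I → Rel c₀ β → β ≠ c₀ → ent g c₀ β * ent g β c₀ = 0 := by
    intro β hβ hβr hne'
    have hβr' : Rel β c₀ := by
      obtain ⟨n', hn'⟩ := hβr
      exact ⟨-n', by rw [hn']; push_cast; ring⟩
    rcases hside with hS | hS
    · rcases lt_or_gt_of_ne hne' with h | h
      · rw [hS β c₀ hβ hc₀ hβr h, mul_zero]
      · rw [hS c₀ β hc₀ hβ hβr' h, zero_mul]
    · rcases lt_or_gt_of_ne hne' with h | h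
      · rw [hS c₀ β hc₀ hβ hβr' h, zero_mul]
      · rw [hS β c₀ hβ hc₀ hβr h, mul_zero]
  have hsq := diag_sq h1 h2 hidem c₀ hc₀ hkill
  have hlam : ent g c₀ c₀ = 0 ∨ ent g c₀ c₀ = 1 := by
    rcases mul_eq_zero.mp (show ent g c₀ c₀ * (ent g c₀ c₀ - 1) = 0 by
      rw [mul_sub, hsq]; ring) with h | h
    · exact Or.inl h
    · exact Or.inr (sub_eq_zero.mp h)
  rcases hlam with h0 | h1lam
  · exact Or.inl (engine h1 h2 hI hidem hside c₀ hc₀ h0)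
  · right
    have hS' : (∀ r c : ℝ, r ∈ I → c ∈ I → Rel c r → r < c →
          ent (fun θ => LinearMap.id - g θ) r c = 0) ∨
        (∀ r c : ℝ, r ∈ I → c ∈ I → Rel c r → c < r →
          ent (fun θ => LinearMap.id - g θ) r c = 0) := by
      rcases hside with hS | hS
      · refine Or.inl (fun r c hr hc hrc hlt => ?_)
        rw [ent_sub r c hr hc hrc, if_neg hlt.ne, hS r c hr hc hrc hlt, sub_zero]
      · refine Or.inr (fun r c hr hc hrc hlt => ?_)
        rw [ent_sub r c hr hc hrc, if_neg hlt.ne', hS r c hr hc hrc hlt, sub_zero]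
    have h0' : ent (fun θ => LinearMap.id - g θ) c₀ c₀ = 0 := by
      rw [ent_sub c₀ c₀ hc₀ hc₀ (Rel.refl c₀), if_pos rfl, h1lam, sub_self]
    have hidem' : ∀ (θ : ℝ) (v : barIdx I θ →₀ k),
        (fun θ => (LinearMap.id - g θ :
            (barIdx I θ →₀ k) →ₗ[k] (barIdx I θ →₀ k))) θ
          ((fun θ => (LinearMap.id - g θ :
            (barIdx I θ →₀ k) →ₗ[k] (barIdx I θ →₀ k))) θ v) =
        (fun θ => (LinearMap.id - g θ :
            (barIdx I θ →₀ k) →ₗ[k] (barIdx I θ →₀ k))) θ v := by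
      intro θ v
      simp only [LinearMap.sub_apply, LinearMap.id_coe, id_eq, map_sub]
      rw [hidem θ v]
      abel
    have hvan := engine (nat1_sub h1) (nat2_sub h2) hI hidem' hS' c₀ hc₀ h0'
    intro θ
    apply LinearMap.ext
    intro v
    have h9 := LinearMap.congr_fun (hvan θ) v
    simp only [LinearMap.sub_apply, LinearMap.id_coe, id_eq, LinearMap.zero_apply] at h9
    exact (sub_eq_zero.mp h9).symm

end BarAux

namespace SRep

variable {k : Type} [Field k] {Q : AtR}

attribute [reducible] SRep.prod

lemma indecomposable_of_idem_trivial (V : SRep k Q) (hnz : V.Nonzero)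
    (htriv : ∀ f : ∀ θ, V.obj θ →ₗ[k] V.obj θ, IsHomFam V V f →
      (∀ (θ : ℝ) (v : V.obj θ), f θ (f θ v) = f θ v) →
      (∀ θ, f θ = 0) ∨ (∀ θ, f θ = LinearMap.id)) :
    Indecomposable V := by
  refine ⟨hnz, ?_⟩
  rintro A B hA hB ⟨e, he1, he2⟩
  set f : ∀ θ, V.obj θ →ₗ[k] V.obj θ := fun θ =>
    (e θ).symm.toLinearMap ∘ₗ
      ((LinearMap.prodMap (LinearMap.id : A.obj θ →ₗ[k] A.obj θ)
        (0 : B.obj θ →ₗ[k] B.obj θ)) ∘ₗ (e θ).toLinearMap) with hfdef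
  have hfapp : ∀ (θ : ℝ) (v : V.obj θ), f θ v = (e θ).symm
      ((LinearMap.prodMap (LinearMap.id : A.obj θ →ₗ[k] A.obj θ)
        (0 : B.obj θ →ₗ[k] B.obj θ)) (e θ v)) := fun θ v => rfl
  have hnat1 : ∀ {θ φ : ℝ} (h : Q.covRel θ φ) (v : V.obj θ),
      f φ (V.map h v) = V.map h (f θ v) := by
    intro θ φ h v
    rw [hfapp, hfapp]
    apply (e φ).injective
    have h2 := he1 h ((e θ).symm
      ((LinearMap.prodMap (LinearMap.id : A.obj θ →ₗ[k] A.obj θ)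
        (0 : B.obj θ →ₗ[k] B.obj θ)) (e θ v)))
    rw [LinearEquiv.apply_symm_apply] at h2
    rw [LinearEquiv.apply_symm_apply, he1 h v, h2]
    show (LinearMap.prodMap LinearMap.id 0)
        ((LinearMap.prodMap (A.map h) (B.map h)) (e θ v))
      = (LinearMap.prodMap (A.map h) (B.map h))
        ((LinearMap.prodMap LinearMap.id 0) (e θ v))
    simp [LinearMap.prodMap_apply]
  have hnat2 : ∀ (θ : ℝ) (v : V.obj (θ + 2 * Real.pi)),
      f θ (V.per θ v) = V.per θ (f (θ + 2 * Real.pi) v) := by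
    intro θ v
    rw [hfapp, hfapp]
    apply (e θ).injective
    have h2 := he2 θ ((e (θ + 2 * Real.pi)).symm
      ((LinearMap.prodMap (LinearMap.id : A.obj (θ + 2 * Real.pi) →ₗ[k] A.obj (θ + 2 * Real.pi))
        (0 : B.obj (θ + 2 * Real.pi) →ₗ[k] B.obj (θ + 2 * Real.pi)))
        (e (θ + 2 * Real.pi) v)))
    rw [LinearEquiv.apply_symm_apply] at h2
    rw [LinearEquiv.apply_symm_apply, he2 θ v, h2]
    show (LinearMap.prodMap LinearMap.id 0)
        (((A.per θ).prodCongr (B.per θ)) (e (θ + 2 * Real.pi) v))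
      = ((A.per θ).prodCongr (B.per θ))
        ((LinearMap.prodMap LinearMap.id 0) (e (θ + 2 * Real.pi) v))
    simp [LinearMap.prodMap_apply, LinearEquiv.prodCongr_apply]
  have hidem : ∀ (θ : ℝ) (v : V.obj θ), f θ (f θ v) = f θ v := by
    intro θ v
    rw [hfapp, hfapp, LinearEquiv.apply_symm_apply]
    congr 1
  rcases htriv f ⟨fun h v => hnat1 h v, hnat2⟩ hidem with hzero | hid
  · obtain ⟨θ₀, a, ha⟩ := hA
    set z : A.obj θ₀ × B.obj θ₀ := (a, 0) with hzdef
    have hfz : f θ₀ ((e θ₀).symm z) = (e θ₀).symm z := by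
      rw [hfapp, LinearEquiv.apply_symm_apply]
      congr 1
    rw [hzero θ₀, LinearMap.zero_apply] at hfz
    have hz0 : z = 0 := by
      have := congrArg (e θ₀) hfz.symm
      rwa [LinearEquiv.apply_symm_apply, map_zero] at this
    exact ha (congrArg Prod.fst hz0)
  · obtain ⟨θ₀, b, hb⟩ := hB
    set z : A.obj θ₀ × B.obj θ₀ := (0, b) with hzdef
    have hfz : f θ₀ ((e θ₀).symm z) = 0 := by
      rw [hfapp, LinearEquiv.apply_symm_apply]
      have hPz : (LinearMap.prodMap (LinearMap.id : A.obj θ₀ →ₗ[k] A.obj θ₀)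
        (0 : B.obj θ₀ →ₗ[k] B.obj θ₀)) z = 0 := by
        simp [LinearMap.prodMap_apply, hzdef]
      rw [hPz, map_zero]
    rw [hid θ₀, LinearMap.id_coe, id_eq] at hfz
    have hz0 : z = 0 := by
      have := congrArg (e θ₀) hfz
      rwa [LinearEquiv.apply_symm_apply, map_zero] at this
    exact hb (congrArg Prod.snd hz0)

end SRep

namespace SRep

variable {k : Type} [Field k] {Q : AtR}

theorem isBar_indecomposable {V : SRep k Q} (hbar : IsBar V) : Indecomposable V := by
  obtain ⟨I, hne, hbd, hIoc, e, he1, he2⟩ := hbar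
  refine indecomposable_of_idem_trivial V ?_ ?_
  · obtain ⟨β₀, hβ₀⟩ := hne
    refine ⟨β₀, (e β₀).symm (Finsupp.single ⟨β₀, hβ₀, BarAux.Rel.refl β₀⟩ 1), ?_⟩
    intro hcon
    have h1 := congrArg (e β₀) hcon
    rw [LinearEquiv.apply_symm_apply, map_zero] at h1
    have h2 := congrArg
      (fun w : barIdx I β₀ →₀ k => w ⟨β₀, hβ₀, BarAux.Rel.refl β₀⟩) h1
    simp only [Finsupp.single_eq_same, Finsupp.zero_apply] at h2
    exact one_ne_zero h2
  · intro f hf hidem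
    set g : ∀ θ : ℝ, (barIdx I θ →₀ k) →ₗ[k] (barIdx I θ →₀ k) := fun θ =>
      (e θ).toLinearMap ∘ₗ f θ ∘ₗ (e θ).symm.toLinearMap with hgdef
    have hgapp : ∀ (θ : ℝ) (w : barIdx I θ →₀ k),
        g θ w = e θ (f θ ((e θ).symm w)) := fun θ w => rfl
    have hfg : ∀ (θ : ℝ) (v : V.obj θ), f θ v = (e θ).symm (g θ (e θ v)) := by
      intro θ v
      rw [hgapp, LinearEquiv.symm_apply_apply, LinearEquiv.symm_apply_apply]
    have hn1 : BarAux.Nat1 Q g := by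
      intro x y h v
      rw [hgapp y, hgapp x]
      have hkey : barMapHom k I x y v = e y (V.map h ((e x).symm v)) := by
        rw [he1 h ((e x).symm v), LinearEquiv.apply_symm_apply]
      rw [hkey, LinearEquiv.symm_apply_apply, hf.1 h ((e x).symm v),
        he1 h (f x ((e x).symm v))]
    have hn2 : BarAux.Nat2 g := by
      intro θ v
      rw [hgapp θ, hgapp (θ + 2 * Real.pi)]
      have hkey : Finsupp.equivMapDomain (barShift I θ) v =
          e θ (V.per θ ((e (θ + 2 * Real.pi)).symm v)) := by
        rw [he2 θ ((e (θ + 2 * Real.pi)).symm v), LinearEquiv.apply_symm_apply]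
      rw [hkey, LinearEquiv.symm_apply_apply, hf.2 θ ((e (θ + 2 * Real.pi)).symm v),
        he2 θ (f (θ + 2 * Real.pi) ((e (θ + 2 * Real.pi)).symm v))]
    have hgidem : ∀ (θ : ℝ) (w : barIdx I θ →₀ k), g θ (g θ w) = g θ w := by
      intro θ w
      have h1 : g θ (g θ w) = e θ (f θ (f θ ((e θ).symm w))) := by
        rw [hgapp θ (g θ w), hgapp θ w, LinearEquiv.symm_apply_apply]
      rw [h1, hidem θ ((e θ).symm w)]
      exact (hgapp θ w).symm
    rcases BarAux.trivial_idem hne hbd hIoc hn1 hn2 hgidem with hg0 | hgid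
    · left
      intro θ
      apply LinearMap.ext
      intro v
      rw [LinearMap.zero_apply, hfg θ v, hg0 θ, LinearMap.zero_apply, map_zero]
    · right
      intro θ
      apply LinearMap.ext
      intro v
      rw [hfg θ v, hgid θ]
      simp

end SRep

namespace SRep

variable {k : Type} [Field k] {Q : AtR}

theorem isJordanCell_indecomposable {V : SRep k Q} (hJ : IsJordanCell V) :
    Indecomposable V := by
  obtain ⟨d, hd1, hdim⟩ := hJ.dim
  refine indecomposable_of_idem_trivial V ?_ ?_
  · -- Nonzero
    refine ⟨Q.α 0, ?_⟩
    by_contra hcon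
    push_neg at hcon
    haveI : Subsingleton (V.obj (Q.α 0)) :=
      ⟨fun x y => by rw [hcon x, hcon y]⟩
    have h0 := hdim (Q.α 0)
    rw [Module.finrank_zero_of_subsingleton] at h0
    omega
  · intro f hf hidem
    have f_castO : ∀ {x y : ℝ} (hxy : x = y) (v : V.obj x),
        f y (V.castO hxy v) = V.castO hxy (f x v) := by
      intro x y hxy v
      subst hxy
      rfl
    have f_step : ∀ (j : ℤ) (v : V.obj (Q.α j)),
        f (Q.α (j + 1)) (V.step hJ.bij j v) = V.step hJ.bij j (f (Q.α j) v) := by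
      intro j v
      unfold SRep.step
      split_ifs with hcase
      · exact hf.1 (AtR.covRel_up j hcase) v
      · have hm : Q.m ≠ 0 := by push_neg at hcase; exact hcase.1
        have he : Even j := by push_neg at hcase; exact hcase.2
        set L := LinearEquiv.ofBijective _ (hJ.bij (AtR.covRel_down j hm he)) with hL
        apply L.injective
        rw [LinearEquiv.apply_symm_apply]
        have h3 : V.map (AtR.covRel_down j hm he) (L.symm v) = v :=
          L.apply_symm_apply v
        calc L (f (Q.α (j+1)) (L.symm v))
            = V.map (AtR.covRel_down j hm he) (f (Q.α (j+1)) (L.symm v)) := rfl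
          _ = f (Q.α j) (V.map (AtR.covRel_down j hm he) (L.symm v)) :=
              (hf.1 (AtR.covRel_down j hm he) (L.symm v)).symm
          _ = f (Q.α j) v := by rw [h3]
    have f_zig : ∀ (n : ℕ) (v : V.obj (Q.α 0)),
        f (Q.α ((n : ℕ) : ℤ)) (V.zig hJ.bij n v) = V.zig hJ.bij n (f (Q.α 0) v) := by
      intro n
      induction n with
      | zero => intro v; exact f_castO _ v
      | succ n ih =>
          intro v
          show f (Q.α ((n + 1 : ℕ) : ℤ))
              (V.castO (congrArg Q.α (by push_cast; ring))
                (V.step hJ.bij (n : ℤ) (V.zig hJ.bij n v)))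
            = V.castO (congrArg Q.α (by push_cast; ring))
                (V.step hJ.bij (n : ℤ) (V.zig hJ.bij n (f (Q.α 0) v)))
          rw [f_castO, f_step, ih]
    have hmono : ∀ v, f (Q.α 0) (V.monodromy hJ.bij v) =
        V.monodromy hJ.bij (f (Q.α 0) v) := by
      intro v
      show f (Q.α 0) (V.per (Q.α 0) (V.castO Q.α_periodN (V.zig hJ.bij Q.periodN v)))
          = V.per (Q.α 0) (V.castO Q.α_periodN (V.zig hJ.bij Q.periodN (f (Q.α 0) v)))
      rw [hf.2 (Q.α 0), f_castO, f_zig]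
    -- the projection is 0 or the identity
    set p : V.obj (Q.α 0) →ₗ[k] V.obj (Q.α 0) := f (Q.α 0) with hp
    have hsplit : (∀ v, p v = 0) ∨ (∀ v, p v = v) := by
      have hcompl : IsCompl (LinearMap.range p) (LinearMap.ker p) := by
        constructor
        · rw [disjoint_iff_inf_le]
          rintro x ⟨⟨y, hy⟩, hx2⟩
          have hker : p x = 0 := hx2
          have : x = 0 := by
            rw [← hy, ← hidem (Q.α 0) y]
            show p (p y) = 0
            rw [hy, hker]
          simp [this]
        · rw [codisjoint_iff_le_sup]
          intro x _
          have hx : x = p x + (x - p x) := by abel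
          rw [hx]
          refine Submodule.add_mem_sup ⟨x, rfl⟩ ?_
          show p (x - p x) = 0
          rw [map_sub, hidem (Q.α 0) x, sub_self]
      have hUinv : ∀ u ∈ LinearMap.range p, V.monodromy hJ.bij u ∈ LinearMap.range p := by
        rintro u ⟨y, rfl⟩
        exact ⟨V.monodromy hJ.bij y, hmono y⟩
      have hWinv : ∀ w ∈ LinearMap.ker p, V.monodromy hJ.bij w ∈ LinearMap.ker p := by
        intro w hw
        have hw' : p w = 0 := hw
        show p (V.monodromy hJ.bij w) = 0
        rw [hmono w, hw', map_zero]
      rcases hJ.indec (LinearMap.range p) (LinearMap.ker p) hcompl hUinv hWinv with h | h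
      · left
        intro v
        have : p v ∈ LinearMap.range p := ⟨v, rfl⟩
        rw [h] at this
        simpa using this
      · right
        intro v
        have : p (p v - v) = 0 := by rw [map_sub, hidem (Q.α 0) v, sub_self]
        have hmem : p v - v ∈ LinearMap.ker p := this
        rw [h] at hmem
        have hzero := Submodule.mem_bot k |>.mp hmem
        exact sub_eq_zero.mp hzero
    have main : ∀ (a : k), (∀ v, f (Q.α 0) v = a • v) →
        ∀ (θ : ℝ) (v : V.obj θ), f θ v = a • v := by
      intro a ha
      have fwd : ∀ {x y : ℝ}, Q.covRel x y → (∀ v, f x v = a • v) →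
          ∀ w, f y w = a • w := by
        intro x y h hx w
        obtain ⟨v, rfl⟩ := (hJ.bij h).2 w
        rw [hf.1 h v, hx v, map_smul]
      have bwd : ∀ {x y : ℝ}, Q.covRel x y → (∀ v, f y v = a • v) →
          ∀ w, f x w = a • w := by
        intro x y h hy w
        apply (hJ.bij h).1
        rw [← hf.1 h w, hy, map_smul]
      have cast' : ∀ {x y : ℝ}, x = y → (∀ v, f x v = a • v) → ∀ w, f y w = a • w := by
        intro x y hxy hx
        subst hxy
        exact hx
      have hstep : ∀ j : ℤ, (∀ v, f (Q.α j) v = a • v) → ∀ v, f (Q.α (j+1)) v = a • v := by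
        intro j hj
        by_cases hm : Q.m = 0
        · exact fwd (AtR.covRel_up j (Or.inl hm)) hj
        · by_cases he : Even j
          · exact bwd (AtR.covRel_down j hm he) hj
          · exact fwd (AtR.covRel_up j (Or.inr he)) hj
      have hstep' : ∀ j : ℤ, (∀ v, f (Q.α (j+1)) v = a • v) → ∀ v, f (Q.α j) v = a • v := by
        intro j hj
        by_cases hm : Q.m = 0
        · exact bwd (AtR.covRel_up j (Or.inl hm)) hj
        · by_cases he : Even j
          · exact fwd (AtR.covRel_down j hm he) hj
          · exact bwd (AtR.covRel_up j (Or.inr he)) hj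
      have hα : ∀ j : ℤ, ∀ v, f (Q.α j) v = a • v := by
        intro j
        induction j using Int.induction_on with
        | zero => exact ha
        | succ n ih => exact hstep n ih
        | pred n ih => exact hstep' (-(n:ℤ) - 1) (cast' (congrArg Q.α (by ring)) ih)
      intro θ
      obtain ⟨t, ht1, ht2⟩ := AtR.exists_arc Q θ
      by_cases hm : Q.m = 0
      · exact fwd (AtR.covRel_of_le hm ht1) (hα t)
      · by_cases he : Even t
        · exact bwd (AtR.covRel_of_even hm he ⟨ht1, ht2.le⟩
            ⟨le_rfl, Q.mono.monotone (by omega)⟩ ht1) (hα t)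
        · exact fwd (AtR.covRel_of_odd hm he ⟨le_rfl, Q.mono.monotone (by omega)⟩
            ⟨ht1, ht2.le⟩ ht1) (hα t)
    rcases hsplit with h0 | h1
    · left
      intro θ
      apply LinearMap.ext
      intro v
      have hv := main 0 (fun v => by rw [zero_smul]; exact h0 v) θ v
      rw [hv, zero_smul, LinearMap.zero_apply]
    · right
      intro θ
      apply LinearMap.ext
      intro v
      have hv := main 1 (fun v => by rw [one_smul]; exact h1 v) θ v
      rw [hv, one_smul, LinearMap.id_coe, id_eq]

end SRep

/-! ## Statement 9 -/

/-- Every bar and every Jordan cell is indecomposable. -/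
theorem bar_or_jordan_indecomposable {k : Type} [Field k] {Q : AtR} (V : SRep k Q)
    (h : SRep.IsBar V ∨ SRep.IsJordanCell V) : SRep.Indecomposable V := by
  rcases h with hbar | hjor
  · exact SRep.isBar_indecomposable hbar
  · exact SRep.isJordanCell_indecomposable hjor
end
end
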